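/- arXiv:1910.03142 — 3 statements merged into one kernel-verified Lean document; each statement's English description precedes it below -/
import Mathlib

section
/- For the elephant random walk with memory parameter p ≤ 3/4, almost surely X_n = 0 for infinitely many n; that is, the ERW is recurrent. -/
open MeasureTheory Filter Topology
set_option linter.unusedSectionVars false
set_option linter.unusedVariables false
set_option linter.unreachableTactic false
set_option linter.unusedTactic false

/-- The natural filtration generated by the steps `η 1, …, η n`. -/
noncomputable def erwFil {Ω : Type*} (η : ℕ → Ω → ℝ) (n : ℕ) : MeasurableSpace Ω :=
  ⨆ k ∈ Finset.Icc 1 n, MeasurableSpace.comap (η k) Real.measurableSpace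

/-- The position of the elephant random walk after `n` steps. -/
noncomputable def erwX {Ω : Type*} (η : ℕ → Ω → ℝ) (n : ℕ) (ω : Ω) : ℝ :=
  ∑ k ∈ Finset.Icc 1 n, η k ω

/-- `η` is an elephant random walk with memory parameter `p` and
first-step parameter `r` on the probability space `(Ω, μ)`. -/
structure IsERW {Ω : Type*} [MeasurableSpace Ω] (μ : Measure Ω) (p r : ℝ)
    (η : ℕ → Ω → ℝ) : Prop where
  prob : IsProbabilityMeasure μ
  p_mem : p ∈ Set.Icc (0 : ℝ) 1
  r_mem : r ∈ Set.Icc (0 : ℝ) 1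
  meas : ∀ k, Measurable (η k)
  pm : ∀ k, 1 ≤ k → ∀ ω, η k ω = 1 ∨ η k ω = -1
  first : μ {ω | η 1 ω = 1} = ENNReal.ofReal r
  cond : ∀ n, 1 ≤ n →
    μ[η (n + 1)|erwFil η n] =ᵐ[μ] fun ω => (2 * p - 1) * erwX η n ω / n

section Aux
variable {Ω : Type*} [m0 : MeasurableSpace Ω] {μ : Measure Ω} {η : ℕ → Ω → ℝ}

lemma erwFil_le (hmeas : ∀ k, Measurable (η k)) (n : ℕ) : erwFil η n ≤ m0 :=
  iSup₂_le fun k _ => (hmeas k).comap_le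

omit m0 in
lemma erwFil_mono : Monotone (erwFil η) := fun n m hnm =>
  biSup_mono fun _ hk => Finset.Icc_subset_Icc_right hnm hk

lemma measurable_eta_fil {k n : ℕ} (hk1 : 1 ≤ k) (hkn : k ≤ n) :
    Measurable[erwFil η n] (η k) := by
  rw [measurable_iff_comap_le]
  have hmem : k ∈ Finset.Icc 1 n := Finset.mem_Icc.mpr ⟨hk1, hkn⟩
  exact le_trans
    (le_iSup (fun _ : k ∈ Finset.Icc 1 n =>
      MeasurableSpace.comap (η k) Real.measurableSpace) hmem)
    (le_iSup (fun k => ⨆ _ : k ∈ Finset.Icc 1 n,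
      MeasurableSpace.comap (η k) Real.measurableSpace) k)

lemma measurable_X_fil (n : ℕ) : Measurable[erwFil η n] (erwX η n) := by
  have : erwX η n = fun ω => ∑ k ∈ Finset.Icc 1 n, η k ω := rfl
  rw [this]
  exact Finset.measurable_sum _ fun k hk =>
    measurable_eta_fil (Finset.mem_Icc.mp hk).1 (Finset.mem_Icc.mp hk).2

lemma measurable_X (hmeas : ∀ k, Measurable (η k)) (n : ℕ) : Measurable (erwX η n) :=
  (measurable_X_fil n).mono (erwFil_le hmeas n) le_rfl

lemma integrable_of_bound [IsProbabilityMeasure μ] {f : Ω → ℝ} (hf : Measurable f)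
    (C : ℝ) (hC : ∀ ω, |f ω| ≤ C) : Integrable f μ :=
  (integrable_const C).mono' hf.aestronglyMeasurable
    (Eventually.of_forall fun ω => by simpa using hC ω)

omit m0 in
lemma abs_eta_le (hpm : ∀ k, 1 ≤ k → ∀ ω, η k ω = 1 ∨ η k ω = -1) {k : ℕ} (hk : 1 ≤ k)
    (ω : Ω) : |η k ω| ≤ 1 := by
  rcases hpm k hk ω with h | h <;> simp [h]

omit m0 in
lemma abs_X_le (hpm : ∀ k, 1 ≤ k → ∀ ω, η k ω = 1 ∨ η k ω = -1) (n : ℕ) (ω : Ω) :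
    |erwX η n ω| ≤ n := by
  calc |erwX η n ω| ≤ ∑ k ∈ Finset.Icc 1 n, |η k ω| := Finset.abs_sum_le_sum_abs _ _
    _ ≤ ∑ _k ∈ Finset.Icc 1 n, (1 : ℝ) :=
      Finset.sum_le_sum fun k hk => abs_eta_le hpm (Finset.mem_Icc.mp hk).1 ω
    _ = n := by simp

omit m0 in
lemma X_succ (n : ℕ) (ω : Ω) : erwX η (n + 1) ω = erwX η n ω + η (n + 1) ω := by
  have h : (1 : ℕ) ≤ n + 1 := Nat.le_add_left 1 n
  simp only [erwX]
  rw [← Finset.sum_Icc_succ_top h]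

omit m0 in
lemma X_int (hpm : ∀ k, 1 ≤ k → ∀ ω, η k ω = 1 ∨ η k ω = -1) (n : ℕ) (ω : Ω) :
    ∃ z : ℤ, erwX η n ω = z := by
  induction n with
  | zero => exact ⟨0, by simp [erwX]⟩
  | succ n ih =>
    obtain ⟨z, hz⟩ := ih
    rcases hpm (n + 1) (Nat.le_add_left 1 n) ω with h | h
    · exact ⟨z + 1, by rw [X_succ, hz, h]; push_cast; ring⟩
    · exact ⟨z - 1, by rw [X_succ, hz, h]; push_cast; ring⟩

end Aux

section Main
variable {Ω : Type*} [m0 : MeasurableSpace Ω] {μ : Measure Ω} {p r : ℝ} {η : ℕ → Ω → ℝ}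

/-- The natural filtration as a `Filtration`. -/
noncomputable def erwFiltration (hmeas : ∀ k, Measurable (η k)) : Filtration ℕ m0 :=
  ⟨fun n => erwFil η n, fun _ _ hnm => erwFil_mono hnm, fun n => erwFil_le hmeas n⟩

lemma integrable_eta (h : IsERW μ p r η) {k : ℕ} (hk : 1 ≤ k) : Integrable (η k) μ := by
  haveI := h.prob
  exact integrable_of_bound (h.meas k) 1 (abs_eta_le h.pm hk)

lemma integrable_X (h : IsERW μ p r η) (n : ℕ) : Integrable (erwX η n) μ := by
  haveI := h.prob
  exact integrable_of_bound (measurable_X h.meas n) n (abs_X_le h.pm n)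

lemma condexp_X_succ (h : IsERW μ p r η) {n : ℕ} (hn : 1 ≤ n) :
    μ[erwX η (n + 1)|erwFil η n] =ᵐ[μ]
      fun ω => (1 + (2 * p - 1) / n) * erwX η n ω := by
  haveI := h.prob
  have hle := erwFil_le h.meas n
  haveI : SigmaFinite (μ.trim hle) := inferInstance
  have hXeq : erwX η (n + 1) = erwX η n + η (n + 1) := funext (X_succ n)
  calc μ[erwX η (n + 1)|erwFil η n]
      =ᵐ[μ] μ[erwX η n|erwFil η n] + μ[η (n + 1)|erwFil η n] := by
        rw [hXeq]; exact condExp_add (integrable_X h n) (integrable_eta h (Nat.le_add_left 1 n)) _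
    _ =ᵐ[μ] fun ω => erwX η n ω + (2 * p - 1) * erwX η n ω / n := by
        have h1 : μ[erwX η n|erwFil η n] = erwX η n :=
          condExp_of_stronglyMeasurable hle (measurable_X_fil n).stronglyMeasurable
            (integrable_X h n)
        filter_upwards [h.cond n hn] with ω hω
        simp only [Pi.add_apply, h1, hω]
    _ =ᵐ[μ] fun ω => (1 + (2 * p - 1) / n) * erwX η n ω := by
        refine Eventually.of_forall fun ω => ?_
        ring

/-- Pull-out property specialised to our setting. -/
lemma integral_mul_eta (h : IsERW μ p r η) {n : ℕ} (hn : 1 ≤ n) {f : Ω → ℝ} {C : ℝ}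
    (hf : Measurable[erwFil η n] f) (hC : ∀ ω, |f ω| ≤ C) :
    ∫ ω, f ω * η (n + 1) ω ∂μ = ∫ ω, f ω * ((2 * p - 1) * erwX η n ω / n) ∂μ := by
  haveI := h.prob
  have hle := erwFil_le h.meas n
  haveI : SigmaFinite (μ.trim hle) := inferInstance
  have hfm : Measurable f := hf.mono hle le_rfl
  have hηint : Integrable (η (n + 1)) μ := integrable_eta h (Nat.le_add_left 1 n)
  have hfηint : Integrable (f * η (n + 1)) μ := by
    refine integrable_of_bound (hfm.mul (h.meas (n + 1))) C fun ω => ?_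
    have h1 := abs_eta_le h.pm (Nat.le_add_left 1 n) (ω := ω)
    calc |(f * η (n + 1)) ω| = |f ω| * |η (n + 1) ω| := abs_mul _ _
      _ ≤ C * 1 := mul_le_mul (hC ω) h1 (abs_nonneg _) ((abs_nonneg _).trans (hC ω))
      _ = C := mul_one C
  have key : μ[f * η (n + 1)|erwFil η n] =ᵐ[μ]
      fun ω => f ω * ((2 * p - 1) * erwX η n ω / n) := by
    calc μ[f * η (n + 1)|erwFil η n]
        =ᵐ[μ] f * μ[η (n + 1)|erwFil η n] :=
          condExp_mul_of_stronglyMeasurable_left hf.stronglyMeasurable hfηint hηint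
      _ =ᵐ[μ] fun ω => f ω * ((2 * p - 1) * erwX η n ω / n) := by
          filter_upwards [h.cond n hn] with ω hω
          simp only [Pi.mul_apply, hω]
  calc ∫ ω, f ω * η (n + 1) ω ∂μ = ∫ ω, (f * η (n + 1)) ω ∂μ := rfl
    _ = ∫ ω, (μ[f * η (n + 1)|erwFil η n]) ω ∂μ := (integral_condExp hle).symm
    _ = ∫ ω, f ω * ((2 * p - 1) * erwX η n ω / n) ∂μ := integral_congr_ae key

end Main

section Path
variable {Ω : Type*} {η : ℕ → Ω → ℝ}

lemma one_le_of_pos_int (hpm : ∀ k, 1 ≤ k → ∀ ω, η k ω = 1 ∨ η k ω = -1) {n : ℕ} {ω : Ω}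
    (hpos : 0 < erwX η n ω) : 1 ≤ erwX η n ω := by
  obtain ⟨z, hz⟩ := X_int hpm n ω
  rw [hz] at hpos ⊢
  have : 0 < z := by exact_mod_cast hpos
  exact_mod_cast this

lemma le_neg_one_of_neg_int (hpm : ∀ k, 1 ≤ k → ∀ ω, η k ω = 1 ∨ η k ω = -1) {n : ℕ} {ω : Ω}
    (hneg : erwX η n ω < 0) : erwX η n ω ≤ -1 := by
  obtain ⟨z, hz⟩ := X_int hpm n ω
  rw [hz] at hneg ⊢
  have : z < 0 := by exact_mod_cast hneg
  have : z ≤ -1 := by omega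
  exact_mod_cast this

lemma sign_persist (hpm : ∀ k, 1 ≤ k → ∀ ω, η k ω = 1 ∨ η k ω = -1) {ω : Ω} {i j : ℕ}
    (hij : i ≤ j) (hnz : ∀ k, i ≤ k → k ≤ j → erwX η k ω ≠ 0) :
    (0 < erwX η i ω → 0 < erwX η j ω) ∧ (erwX η i ω < 0 → erwX η j ω < 0) := by
  induction j, hij using Nat.le_induction with
  | base => exact ⟨id, id⟩
  | succ j hij ih =>
    have hnz' : ∀ k, i ≤ k → k ≤ j → erwX η k ω ≠ 0 := fun k h1 h2 =>
      hnz k h1 (h2.trans (Nat.le_succ j))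
    obtain ⟨ihp, ihn⟩ := ih hnz'
    have hstep : η (j + 1) ω = 1 ∨ η (j + 1) ω = -1 := hpm (j + 1) (Nat.le_add_left 1 j) ω
    have hnzj : erwX η (j + 1) ω ≠ 0 := hnz (j + 1) (hij.trans (Nat.le_succ j)) le_rfl
    constructor
    · intro hi
      have h1 : 1 ≤ erwX η j ω := one_le_of_pos_int hpm (ihp hi)
      have h0 : 0 ≤ erwX η (j + 1) ω := by
        rw [X_succ]
        rcases hstep with h | h <;> rw [h] <;> linarith
      exact lt_of_le_of_ne h0 (Ne.symm hnzj)
    · intro hi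
      have h1 : erwX η j ω ≤ -1 := le_neg_one_of_neg_int hpm (ihn hi)
      have h0 : erwX η (j + 1) ω ≤ 0 := by
        rw [X_succ]
        rcases hstep with h | h <;> rw [h] <;> linarith
      exact lt_of_le_of_ne h0 hnzj

lemma exists_zero_between (hpm : ∀ k, 1 ≤ k → ∀ ω, η k ω = 1 ∨ η k ω = -1) {ω : Ω} {i j : ℕ}
    (hij : i ≤ j) (hi : 0 < erwX η i ω) (hj : erwX η j ω < 0) :
    ∃ k, i ≤ k ∧ k ≤ j ∧ erwX η k ω = 0 := by
  by_contra hcon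
  push_neg at hcon
  have hnz : ∀ k, i ≤ k → k ≤ j → erwX η k ω ≠ 0 := hcon
  exact absurd ((sign_persist hpm hij hnz).1 hi) (not_lt.mpr hj.le)

end Path

section CaseC
variable {Ω : Type*} [m0 : MeasurableSpace Ω] {μ : Measure Ω} {p r : ℝ} {η : ℕ → Ω → ℝ}

omit m0 in
lemma abs_abs_sub_one (hpm : ∀ k, 1 ≤ k → ∀ ω, η k ω = 1 ∨ η k ω = -1) {m : ℕ} {ω : Ω}
    (ha : erwX η m ω ≠ 0) (hb : erwX η (m + 1) ω ≠ 0) :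
    |abs (erwX η (m + 1) ω) - abs (erwX η m ω)| = 1 := by
  have hstep : η (m + 1) ω = 1 ∨ η (m + 1) ω = -1 := hpm (m + 1) (Nat.le_add_left 1 m) ω
  have hsucc := X_succ (η := η) m ω
  rcases lt_or_gt_of_ne ha with hneg | hpos
  · have h1 : erwX η m ω ≤ -1 := le_neg_one_of_neg_int hpm hneg
    have h0 : erwX η (m + 1) ω ≤ 0 := by rcases hstep with h | h <;> rw [hsucc, h] <;> linarith
    have hblt : erwX η (m + 1) ω < 0 := lt_of_le_of_ne h0 hb
    rw [abs_of_neg hblt, abs_of_neg hneg]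
    rcases hstep with h | h <;> rw [hsucc, h] <;> simp [abs_of_nonneg, abs_of_nonpos] <;> norm_num
  · have h1 : 1 ≤ erwX η m ω := one_le_of_pos_int hpm hpos
    have h0 : 0 ≤ erwX η (m + 1) ω := by rcases hstep with h | h <;> rw [hsucc, h] <;> linarith
    have hblt : 0 < erwX η (m + 1) ω := lt_of_le_of_ne h0 (Ne.symm hb)
    rw [abs_of_pos hblt, abs_of_pos hpos]
    rcases hstep with h | h <;> rw [hsucc, h] <;> simp <;> norm_num

lemma case_le_half (h : IsERW μ p r η) (hp2 : p ≤ 1 / 2) {N : ℕ} (hN : 1 ≤ N) :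
    ∀ᵐ ω ∂μ, ∃ n, N ≤ n ∧ erwX η n ω = 0 := by
  haveI := h.prob
  -- the event of no zero up to time N + n
  set A : ℕ → Set Ω := fun n => {ω | ∀ m, N ≤ m → m ≤ N + n → erwX η m ω ≠ 0} with hA
  have hAmeas : ∀ n, MeasurableSet[erwFil η (N + n)] (A n) := by
    intro n
    have : A n = ⋂ m ∈ Set.Icc N (N + n), {ω | erwX η m ω ≠ 0} := by
      ext ω
      simp only [hA, Set.mem_setOf_eq, Set.mem_iInter, Set.mem_Icc]
      tauto
    rw [this]
    refine MeasurableSet.biInter (Set.to_countable _) fun m hm => ?_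
    exact ((measurable_X_fil m).mono (erwFil_mono hm.2) le_rfl) (measurableSet_singleton 0).compl
  have hAanti : ∀ n, A (n + 1) ⊆ A n := fun n ω hω m h1 h2 => hω m h1 (h2.trans (by omega))
  set sgn : ℕ → Ω → ℝ := fun n ω => if 0 ≤ erwX η (N + n) ω then 1 else -1 with hsgn
  have hsgnmeas : ∀ n, Measurable[erwFil η (N + n)] (sgn n) := by
    intro n
    letI : MeasurableSpace Ω := erwFil η (N + n)
    exact Measurable.ite (measurableSet_le measurable_const (measurable_X_fil (N + n)))
      measurable_const measurable_const
  set g : ℕ → Ω → ℝ := fun n => (A n).indicator (sgn n) with hg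
  have hgmeas : ∀ n, Measurable[erwFil η (N + n)] (g n) := by
    intro n
    letI : MeasurableSpace Ω := erwFil η (N + n)
    exact (hsgnmeas n).indicator (hAmeas n)
  have hgbd : ∀ n ω, |g n ω| ≤ 1 := by
    intro n ω
    by_cases hω : ω ∈ A n <;> simp [hg, hsgn, hω, Set.indicator_of_mem, Set.indicator_of_notMem]
    split <;> norm_num
  set Y : ℕ → Ω → ℝ := fun n => (A n).indicator (fun ω => |erwX η (N + n) ω|) with hY
  have hYmeas : ∀ n, Measurable[erwFil η (N + n)] (Y n) := by
    intro n
    letI : MeasurableSpace Ω := erwFil η (N + n)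
    exact ((measurable_X_fil (N + n)).abs).indicator (hAmeas n)
  have hYnonneg : ∀ n ω, 0 ≤ Y n ω := by
    intro n ω
    by_cases hω : ω ∈ A n <;>
      simp [hY, hω, Set.indicator_of_mem, Set.indicator_of_notMem, abs_nonneg]
  have hYbd : ∀ n ω, |Y n ω| ≤ (N + n : ℝ) := by
    intro n ω
    by_cases hω : ω ∈ A n
    · simp only [hY, Set.indicator_of_mem hω, abs_abs]
      exact_mod_cast abs_X_le h.pm (N + n) ω
    · simp only [hY, Set.indicator_of_notMem hω, abs_zero]
      positivity
  have hYint : ∀ n, Integrable (Y n) μ := fun n =>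
    integrable_of_bound ((hYmeas n).mono (erwFil_le h.meas _) le_rfl) _ (hYbd n)
  -- key pointwise identities
  have K1 : ∀ n ω, g n ω * erwX η (N + n) ω = Y n ω := by
    intro n ω
    by_cases hω : ω ∈ A n
    · simp only [hg, hY, Set.indicator_of_mem hω, hsgn]
      split
      · rw [one_mul, abs_of_nonneg]; assumption
      · rw [neg_one_mul, abs_of_neg]; push_neg at *; assumption
    · simp [hg, hY, Set.indicator_of_notMem hω]
  have K2 : ∀ n ω, Y (n + 1) ω = g n ω * erwX η (N + n + 1) ω := by
    intro n ω
    have hNn : N + (n + 1) = (N + n) + 1 := by omega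
    by_cases hω : ω ∈ A n
    · have hXn : erwX η (N + n) ω ≠ 0 := hω (N + n) (by omega) (by omega)
      simp only [hg, Set.indicator_of_mem hω, hsgn]
      by_cases hz : erwX η (N + n + 1) ω = 0
      · have : ω ∉ A (n + 1) := by
          intro hcon
          exact hcon (N + n + 1) (by omega) (by omega) hz
        simp [hY, Set.indicator_of_notMem this, hz]
      · have hmem : ω ∈ A (n + 1) := by
          intro m h1 h2
          rcases Nat.lt_or_ge m (N + n + 1) with hm | hm
          · exact hω m h1 (by omega)
          · have : m = N + n + 1 := by omega
            rw [this]; exact hz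
        simp only [hY, Set.indicator_of_mem hmem, hNn]
        rcases lt_or_gt_of_ne hXn with hneg | hpos
        · have h1 : erwX η (N + n) ω ≤ -1 := le_neg_one_of_neg_int h.pm hneg
          have hstep : η (N + n + 1) ω = 1 ∨ η (N + n + 1) ω = -1 :=
            h.pm _ (Nat.le_add_left 1 _) ω
          have h0 : erwX η (N + n + 1) ω ≤ 0 := by
            rcases hstep with hh | hh <;> rw [X_succ, hh] <;> linarith
          rw [if_neg (by linarith), abs_of_nonpos h0, neg_one_mul]
        · have h1 : 1 ≤ erwX η (N + n) ω := one_le_of_pos_int h.pm hpos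
          have hstep : η (N + n + 1) ω = 1 ∨ η (N + n + 1) ω = -1 :=
            h.pm _ (Nat.le_add_left 1 _) ω
          have h0 : 0 ≤ erwX η (N + n + 1) ω := by
            rcases hstep with hh | hh <;> rw [X_succ, hh] <;> linarith
          rw [if_pos (by linarith), abs_of_nonneg h0, one_mul]
    · have hnot : ω ∉ A (n + 1) := fun hcon => hω (hAanti n hcon)
      simp [hY, hg, Set.indicator_of_notMem hω, Set.indicator_of_notMem hnot]
  -- the filtration shifted by N
  set 𝒢 : Filtration ℕ m0 :=
    ⟨fun n => erwFil η (N + n), fun i j hij => erwFil_mono (by omega),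
      fun n => erwFil_le h.meas _⟩ with h𝒢
  have h𝒢n : ∀ n, 𝒢 n = erwFil η (N + n) := fun n => rfl
  -- Y is a supermartingale
  have hsuper : Supermartingale Y 𝒢 μ := by
    refine supermartingale_nat (fun n => ?_) hYint (fun n => ?_)
    · exact (hYmeas n).stronglyMeasurable
    · have hfun : Y (n + 1) = g n * erwX η (N + n + 1) := by
        ext ω; exact K2 n ω
      have hprodint : Integrable (g n * erwX η (N + n + 1)) μ := by
        refine integrable_of_bound
          (((hgmeas n).mono (erwFil_le h.meas _) le_rfl).mul (measurable_X h.meas _))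
          (N + n + 1 : ℝ) fun ω => ?_
        rw [Pi.mul_apply, abs_mul]
        calc |g n ω| * |erwX η (N + n + 1) ω| ≤ 1 * (N + n + 1 : ℝ) := by
              refine mul_le_mul (hgbd n ω) ?_ (abs_nonneg _) zero_le_one
              exact_mod_cast abs_X_le h.pm (N + n + 1) ω
          _ = (N + n + 1 : ℝ) := one_mul _
      have hcx := condexp_X_succ h (n := N + n) (by omega)
      have hpull : μ[g n * erwX η (N + n + 1)|erwFil η (N + n)] =ᵐ[μ]
          g n * μ[erwX η (N + n + 1)|erwFil η (N + n)] :=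
        condExp_mul_of_stronglyMeasurable_left (hgmeas n).stronglyMeasurable hprodint
          (integrable_X h _)
      rw [h𝒢n, hfun]
      calc μ[g n * erwX η (N + n + 1)|erwFil η (N + n)]
          =ᵐ[μ] g n * μ[erwX η (N + n + 1)|erwFil η (N + n)] := hpull
        _ ≤ᵐ[μ] Y n := by
            filter_upwards [hcx] with ω hω
            rw [Pi.mul_apply, hω]
            have ht : (1 : ℝ) ≤ ((N + n : ℕ) : ℝ) := by
              exact_mod_cast (by omega : 1 ≤ N + n)
            have ht0 : (0 : ℝ) < ((N + n : ℕ) : ℝ) := by linarith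
            have hp0 := h.p_mem.1
            have hc1 : (2 * p - 1) / ((N + n : ℕ) : ℝ) ≤ 0 := by
              rw [div_nonpos_iff]; right; exact ⟨by linarith, by linarith⟩
            have hc2 : -1 ≤ (2 * p - 1) / ((N + n : ℕ) : ℝ) := by
              rw [le_div_iff₀ ht0]; nlinarith
            calc g n ω * ((1 + (2 * p - 1) / ((N + n : ℕ) : ℝ)) * erwX η (N + n) ω)
                = (1 + (2 * p - 1) / ((N + n : ℕ) : ℝ)) * (g n ω * erwX η (N + n) ω) := by
                  ring
              _ = (1 + (2 * p - 1) / ((N + n : ℕ) : ℝ)) * Y n ω := by rw [K1]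
              _ ≤ 1 * Y n ω := mul_le_mul_of_nonneg_right (by linarith) (hYnonneg n ω)
              _ = Y n ω := one_mul _
  -- L¹ boundedness: E[Y n] ≤ E[Y 0] ≤ N
  have hEbound : ∀ n, ∫ ω, Y n ω ∂μ ≤ (N : ℝ) := by
    intro n
    have h1 : μ[Y n|𝒢 0] ≤ᵐ[μ] Y 0 := hsuper.2.1 0 n (Nat.zero_le n)
    have h2 : ∫ ω, Y n ω ∂μ = ∫ ω, (μ[Y n|𝒢 0]) ω ∂μ := (integral_condExp (𝒢.le 0)).symm
    have h3 : ∫ ω, (μ[Y n|𝒢 0]) ω ∂μ ≤ ∫ ω, Y 0 ω ∂μ :=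
      integral_mono_ae integrable_condExp (hYint 0) h1
    have h4 : ∫ ω, Y 0 ω ∂μ ≤ ∫ _ω, (N : ℝ) ∂μ := by
      refine integral_mono (hYint 0) (integrable_const _) fun ω => ?_
      have := hYbd 0 ω
      rw [abs_of_nonneg (hYnonneg 0 ω)] at this
      simpa using this
    have h5 : ∫ _ω : Ω, (N : ℝ) ∂μ = (N : ℝ) := by simp
    linarith
  have hLp : ∀ n, eLpNorm (Y n) 1 μ ≤ ((N : NNReal) : ENNReal) := by
    intro n
    rw [eLpNorm_one_eq_lintegral_enorm]
    have hae : 0 ≤ᵐ[μ] Y n := Eventually.of_forall (hYnonneg n)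
    have heq : ∫⁻ ω, ‖Y n ω‖ₑ ∂μ = ENNReal.ofReal (∫ ω, Y n ω ∂μ) := by
      rw [ofReal_integral_eq_lintegral_ofReal (hYint n) hae]
      refine lintegral_congr fun ω => ?_
      rw [← Real.enorm_eq_ofReal (hYnonneg n ω)]
    rw [heq]
    calc ENNReal.ofReal (∫ ω, Y n ω ∂μ) ≤ ENNReal.ofReal (N : ℝ) :=
          ENNReal.ofReal_le_ofReal (hEbound n)
      _ = ((N : NNReal) : ENNReal) := by
          rw [ENNReal.ofReal_natCast]
          simp
  -- supermartingale convergence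
  have hconv : ∀ᵐ ω ∂μ, ∃ c, Tendsto (fun n => (-Y) n ω) atTop (𝓝 c) := by
    refine Submartingale.exists_ae_tendsto_of_bdd (R := (N : NNReal)) hsuper.neg fun n => ?_
    rw [show (-Y) n = -(Y n) from rfl, eLpNorm_neg]
    exact hLp n
  -- conclusion
  filter_upwards [hconv] with ω hω
  obtain ⟨c, hc⟩ := hω
  by_contra hcon
  push_neg at hcon
  have hmem : ∀ n, ω ∈ A n := fun n m h1 _ => hcon m h1
  have hdiff : ∀ n, |(-Y) (n + 1) ω - (-Y) n ω| = 1 := by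
    intro n
    have hYn : Y n ω = |erwX η (N + n) ω| := Set.indicator_of_mem (hmem n) _
    have hYn1 : Y (n + 1) ω = |erwX η (N + n + 1) ω| :=
      Set.indicator_of_mem (hmem (n + 1)) _
    have ha : erwX η (N + n) ω ≠ 0 := hcon (N + n) (by omega)
    have hb : erwX η (N + n + 1) ω ≠ 0 := hcon (N + n + 1) (by omega)
    have := abs_abs_sub_one h.pm (m := N + n) (ω := ω) ha hb
    simp only [Pi.neg_apply]
    rw [show -Y (n + 1) ω - -Y n ω = -(Y (n + 1) ω - Y n ω) by ring, abs_neg, hYn, hYn1]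
    exact this
  have h1 : Tendsto (fun n => (-Y) (n + 1) ω - (-Y) n ω) atTop (𝓝 (c - c)) :=
    ((hc.comp (tendsto_add_atTop_nat 1)).sub hc)
  rw [sub_self] at h1
  have h2 : Tendsto (fun n => |(-Y) (n + 1) ω - (-Y) n ω|) atTop (𝓝 |0|) := h1.abs
  rw [abs_zero] at h2
  have h3 : Tendsto (fun _ : ℕ => (1 : ℝ)) atTop (𝓝 0) := by
    refine Tendsto.congr (fun n => (hdiff n)) h2
  have := tendsto_nhds_unique h3 tendsto_const_nhds
  norm_num at this

end CaseC

section CaseD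
variable {Ω : Type*} [m0 : MeasurableSpace Ω] {μ : Measure Ω} {p r : ℝ} {η : ℕ → Ω → ℝ}

/-- The normalizing constants `aₙ = ∏_{k=1}^n (1 + (2p-1)/k)`. -/
noncomputable def erwA (p : ℝ) (n : ℕ) : ℝ := ∏ k ∈ Finset.Icc 1 n, (1 + (2 * p - 1) / k)

lemma erwA_zero : erwA p 0 = 1 := by simp [erwA]

lemma erwA_succ (n : ℕ) : erwA p (n + 1) = erwA p n * (1 + (2 * p - 1) / (n + 1)) := by
  rw [erwA, erwA, Finset.prod_Icc_succ_top (Nat.le_add_left 1 n)]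
  push_cast
  ring_nf

lemma one_le_erwA (hp1 : 1 / 2 ≤ p) (n : ℕ) : 1 ≤ erwA p n := by
  induction n with
  | zero => rw [erwA_zero]
  | succ n ih =>
    rw [erwA_succ]
    have h1 : (0 : ℝ) ≤ (2 * p - 1) / (n + 1 : ℝ) := by
      apply div_nonneg (by linarith) (by positivity)
    nlinarith

lemma erwA_pos (hp1 : 1 / 2 ≤ p) (n : ℕ) : 0 < erwA p n :=
  lt_of_lt_of_le one_pos (one_le_erwA hp1 n)

lemma erwA_sq_le (hp1 : 1 / 2 ≤ p) (hp2 : p ≤ 3 / 4) (n : ℕ) :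
    (erwA p n) ^ 2 ≤ 8 * n + 6 := by
  induction n with
  | zero => rw [erwA_zero]; norm_num
  | succ n ih =>
    rw [erwA_succ, mul_pow]
    have hm : (0 : ℝ) < (n : ℝ) + 1 := by positivity
    have hα : 0 ≤ 2 * p - 1 := by linarith
    have hα2 : 2 * p - 1 ≤ 1 / 2 := by linarith
    have hd : (2 * p - 1) / ((n : ℝ) + 1) ≤ 1 / (2 * ((n : ℝ) + 1)) := by
      rw [div_le_div_iff₀ hm (by positivity)]
      ring_nf
      nlinarith
    have hd0 : 0 ≤ (2 * p - 1) / ((n : ℝ) + 1) := div_nonneg hα hm.le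
    have hsq : (1 + (2 * p - 1) / ((n : ℝ) + 1)) ^ 2 ≤
        (1 + 1 / (2 * ((n : ℝ) + 1))) ^ 2 := by nlinarith
    have hA0 : (0 : ℝ) ≤ (erwA p n) ^ 2 := sq_nonneg _
    have key : ∀ t : ℝ, 1 ≤ t → (8 * t - 2) * (1 + 1 / (2 * t)) ^ 2 ≤ 8 * t + 6 := by
      intro t ht
      have ht0 : (0 : ℝ) < t := by linarith
      have e : (1 + 1 / (2 * t)) ^ 2 = (2 * t + 1) ^ 2 / (2 * t) ^ 2 := by
        rw [eq_div_iff (by positivity)]; field_simp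
      rw [e, ← sub_nonneg]
      have e2 : 8 * t + 6 - (8 * t - 2) * ((2 * t + 1) ^ 2 / (2 * t) ^ 2) =
          ((8 * t + 6) * (2 * t) ^ 2 - (8 * t - 2) * (2 * t + 1) ^ 2) / (2 * t) ^ 2 := by
        field_simp
      rw [e2]
      apply div_nonneg _ (by positivity)
      nlinarith
    have key' := key ((n : ℝ) + 1) (by linarith)
    calc (erwA p n) ^ 2 * (1 + (2 * p - 1) / ((n : ℝ) + 1)) ^ 2
        ≤ (8 * (n : ℝ) + 6) * (1 + 1 / (2 * ((n : ℝ) + 1))) ^ 2 := by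
          apply mul_le_mul ih hsq (by positivity) (by linarith)
      _ = (8 * ((n : ℝ) + 1) - 2) * (1 + 1 / (2 * ((n : ℝ) + 1))) ^ 2 := by ring
      _ ≤ 8 * ((n : ℝ) + 1) + 6 := key'
      _ = 8 * ((n + 1 : ℕ) : ℝ) + 6 := by push_cast; ring

set_option maxHeartbeats 1000000 in
lemma case_gt_half (h : IsERW μ p r η) (hp1 : 1 / 2 ≤ p) (hp2 : p ≤ 3 / 4) :
    ∀ᵐ ω ∂μ, ∀ N : ℕ, ∃ n, N ≤ n ∧ erwX η n ω = 0 := by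
  haveI := h.prob
  have hα0 : (0 : ℝ) ≤ 2 * p - 1 := by linarith
  have hα1 : (2 : ℝ) * p - 1 ≤ 1 / 2 := by linarith
  set M : ℕ → Ω → ℝ := fun n ω => erwX η (n + 1) ω / erwA p n with hM
  set 𝒢 : Filtration ℕ m0 :=
    ⟨fun n => erwFil η (n + 1), fun i j hij => erwFil_mono (by omega),
      fun n => erwFil_le h.meas _⟩ with h𝒢
  have h𝒢n : ∀ n, 𝒢 n = erwFil η (n + 1) := fun n => rfl
  have hMmeasF : ∀ n, Measurable[erwFil η (n + 1)] (M n) := by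
    intro n
    letI : MeasurableSpace Ω := erwFil η (n + 1)
    exact (measurable_X_fil (n + 1)).div measurable_const
  have hMmeas : ∀ n, Measurable (M n) := fun n =>
    (hMmeasF n).mono (erwFil_le h.meas _) le_rfl
  have hMbd : ∀ n ω, |M n ω| ≤ (n + 1 : ℝ) := by
    intro n ω
    calc |M n ω| = |erwX η (n + 1) ω| / erwA p n := by
          rw [hM, abs_div, abs_of_pos (erwA_pos hp1 n)]
      _ ≤ |erwX η (n + 1) ω| := div_le_self (abs_nonneg _) (one_le_erwA hp1 n)
      _ ≤ (n + 1 : ℝ) := by exact_mod_cast abs_X_le h.pm (n + 1) ω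
  have hMint : ∀ n, Integrable (M n) μ := fun n =>
    integrable_of_bound (hMmeas n) _ (hMbd n)
  have hM0 : ∀ ω, |M 0 ω| = 1 := by
    intro ω
    have : erwX η 1 ω = η 1 ω := by simp [erwX]
    rw [hM]
    simp only [erwA_zero, div_one, this]
    rcases h.pm 1 le_rfl ω with hh | hh <;> rw [hh] <;> norm_num
  -- martingale property
  have hmart : Martingale M 𝒢 μ := by
    refine martingale_nat (fun n => (hMmeasF n).stronglyMeasurable) hMint (fun n => ?_)
    have hsmul : M (n + 1) = (erwA p (n + 1))⁻¹ • erwX η (n + 2) := by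
      ext ω
      simp only [hM, Pi.smul_apply, smul_eq_mul]
      rw [div_eq_inv_mul]
    have h1 : μ[M (n + 1)|𝒢 n] =ᵐ[μ]
        (erwA p (n + 1))⁻¹ • μ[erwX η (n + 2)|erwFil η (n + 1)] := by
      rw [h𝒢n, hsmul]
      exact condExp_smul _ _ _
    have h2 := condexp_X_succ h (n := n + 1) (by omega)
    have h3 : μ[erwX η (n + 1 + 1)|erwFil η (n + 1)] =ᵐ[μ]
        fun ω => (1 + (2 * p - 1) / ((n + 1 : ℕ) : ℝ)) * erwX η (n + 1) ω := h2
    refine EventuallyEq.symm ?_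
    calc μ[M (n + 1)|𝒢 n]
        =ᵐ[μ] (erwA p (n + 1))⁻¹ • μ[erwX η (n + 2)|erwFil η (n + 1)] := h1
      _ =ᵐ[μ] M n := by
          filter_upwards [h3] with ω hω
          simp only [Pi.smul_apply, smul_eq_mul]
          rw [show (n + 2) = (n + 1) + 1 from rfl, hω, hM]
          have hA := (erwA_pos hp1 n).ne'
          have hc : (0 : ℝ) < 1 + (2 * p - 1) / ((n + 1 : ℕ) : ℝ) := by
            have : (0 : ℝ) ≤ (2 * p - 1) / ((n + 1 : ℕ) : ℝ) :=
              div_nonneg hα0 (by positivity)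
            linarith
          rw [erwA_succ]
          push_cast
          field_simp
  -- difference identity
  have hΔ : ∀ n ω, M (n + 1) ω - M n ω =
      (η (n + 2) ω - (2 * p - 1) * erwX η (n + 1) ω / ((n + 1 : ℕ) : ℝ)) /
        erwA p (n + 1) := by
    intro n ω
    have hA := (erwA_pos hp1 n).ne'
    have hc : (0 : ℝ) < 1 + (2 * p - 1) / ((n : ℝ) + 1) := by
      have : (0 : ℝ) ≤ (2 * p - 1) / ((n : ℝ) + 1) := div_nonneg hα0 (by positivity)
      linarith
    have hX2 : erwX η (n + 2) ω = erwX η (n + 1) ω + η (n + 2) ω := X_succ (n + 1) ω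
    rw [hM]
    simp only
    rw [hX2, erwA_succ]
    push_cast
    field_simp
    ring
  -- bound on |g| where g is the drift
  have hgbd : ∀ n ω, |(2 * p - 1) * erwX η (n + 1) ω / ((n + 1 : ℕ) : ℝ)| ≤ 2 * p - 1 := by
    intro n ω
    rw [abs_div, abs_mul, abs_of_nonneg hα0, abs_of_pos (show (0:ℝ) < ((n+1 : ℕ) : ℝ) by positivity)]
    rw [div_le_iff₀ (show (0:ℝ) < ((n+1 : ℕ) : ℝ) by positivity)]
    have := abs_X_le h.pm (n + 1) ω
    nlinarith [abs_nonneg (erwX η (n + 1) ω)]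
  -- jump bound
  have hjump : ∀ n ω, |M (n + 1) ω - M n ω| ≤ 2 := by
    intro n ω
    rw [hΔ n ω]
    have hA1 := one_le_erwA hp1 (n + 1)
    calc |(η (n + 2) ω - (2 * p - 1) * erwX η (n + 1) ω / ((n + 1 : ℕ) : ℝ)) / erwA p (n + 1)|
        = |η (n + 2) ω - (2 * p - 1) * erwX η (n + 1) ω / ((n + 1 : ℕ) : ℝ)| / erwA p (n + 1) := by
          rw [abs_div, abs_of_pos (erwA_pos hp1 (n + 1))]
      _ ≤ |η (n + 2) ω - (2 * p - 1) * erwX η (n + 1) ω / ((n + 1 : ℕ) : ℝ)| :=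
          div_le_self (abs_nonneg _) hA1
      _ ≤ |η (n + 2) ω| + |(2 * p - 1) * erwX η (n + 1) ω / ((n + 1 : ℕ) : ℝ)| := abs_sub _ _
      _ ≤ 1 + (2 * p - 1) := add_le_add (abs_eta_le h.pm (by omega) ω) (hgbd n ω)
      _ ≤ 2 := by linarith
  -- the hitting estimate
  have hhit : ∀ b : ℝ, 1 ≤ b → μ {ω | ∀ k, |M k ω| < b} = 0 := by
    intro b hb
    set B : ℕ → Set Ω := fun n => {ω | ∀ k ≤ n, |M k ω| < b} with hB
    set Cset : Set Ω := {ω | ∀ k, |M k ω| < b} with hCs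
    have hCB : ∀ n, Cset ⊆ B n := fun n ω hω k _ => hω k
    have hBanti : ∀ n, B (n + 1) ⊆ B n := fun n ω hω k hk => hω k (by omega)
    have hBmeasF : ∀ n, MeasurableSet[erwFil η (n + 1)] (B n) := by
      intro n
      have hBeq : B n = ⋂ k ∈ Set.Iic n, {ω | |M k ω| < b} := by
        ext ω; simp [hB, Set.mem_Iic]
      rw [hBeq]
      letI : MeasurableSpace Ω := erwFil η (n + 1)
      refine MeasurableSet.biInter (Set.to_countable _) fun k hk => ?_
      have hmk : Measurable[erwFil η (n + 1)] (M k) :=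
        (hMmeasF k).mono (erwFil_mono (by simpa using Nat.succ_le_succ hk)) le_rfl
      exact measurableSet_lt hmk.abs measurable_const
    have hBmeas : ∀ n, MeasurableSet (B n) := fun n =>
      (erwFil_le h.meas (n + 1)) _ (hBmeasF n)
    set D : ℕ → Ω → ℝ := fun n => (B n).indicator (fun ω => M (n + 1) ω - M n ω) with hD
    set S : ℕ → Ω → ℝ := fun n ω => M 0 ω + ∑ k ∈ Finset.range n, D k ω with hS
    have hSsucc : ∀ n ω, S (n + 1) ω = S n ω + D n ω := by
      intro n ω
      simp only [hS, Finset.sum_range_succ]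
      ring
    have hSM : ∀ n ω, ω ∈ B n → S n ω = M n ω := by
      intro n
      induction n with
      | zero => intro ω _; simp [hS]
      | succ n ih =>
        intro ω hω
        have hω' : ω ∈ B n := hBanti n hω
        rw [hSsucc, ih ω hω', hD]
        simp only [Set.indicator_of_mem hω']
        ring
    have hSbd : ∀ n ω, |S n ω| ≤ b + 2 := by
      intro n
      induction n with
      | zero =>
        intro ω
        have : S 0 ω = M 0 ω := by simp [hS]
        rw [this, hM0 ω]
        linarith
      | succ n ih =>
        intro ω
        by_cases hω : ω ∈ B n
        · have hSn1 : S (n + 1) ω = M (n + 1) ω := by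
            rw [hSsucc, hSM n ω hω, hD]
            simp only [Set.indicator_of_mem hω]
            ring
          rw [hSn1]
          have h1 : |M n ω| < b := hω n le_rfl
          have h2 := hjump n ω
          calc |M (n + 1) ω| = |M n ω + (M (n + 1) ω - M n ω)| := by ring_nf
            _ ≤ |M n ω| + |M (n + 1) ω - M n ω| := abs_add_le _ _
            _ ≤ b + 2 := by linarith
        · rw [hSsucc, hD]
          simp only [Set.indicator_of_notMem hω, add_zero]
          exact ih ω
    have hSmeasF : ∀ n, Measurable[erwFil η (n + 1)] (S n) := by
      intro n
      letI : MeasurableSpace Ω := erwFil η (n + 1)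
      refine Measurable.add ((hMmeasF 0).mono (erwFil_mono (by omega)) le_rfl) ?_
      refine Finset.measurable_sum _ fun k hk => ?_
      have hk' : k + 1 + 1 ≤ n + 1 := by
        have := Finset.mem_range.mp hk; omega
      have hBk : MeasurableSet[erwFil η (n + 1)] (B k) :=
        (erwFil_mono (by omega : k + 1 ≤ n + 1)) _ (hBmeasF k)
      have hMk : Measurable[erwFil η (n + 1)] (fun ω => M (k + 1) ω - M k ω) :=
        ((hMmeasF (k + 1)).mono (erwFil_mono hk') le_rfl).sub
          ((hMmeasF k).mono (erwFil_mono (by omega : k + 1 ≤ n + 1)) le_rfl)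
      exact hMk.indicator hBk
    have hSmeas : ∀ n, Measurable (S n) := fun n =>
      (hSmeasF n).mono (erwFil_le h.meas _) le_rfl
    have hDbd : ∀ n ω, |D n ω| ≤ 2 := by
      intro n ω
      by_cases hω : ω ∈ B n
      · rw [hD]; simp only [Set.indicator_of_mem hω]; exact hjump n ω
      · rw [hD]; simp [Set.indicator_of_notMem hω]
    have hDmeas : ∀ n, Measurable (D n) := fun n =>
      (((hMmeas (n + 1)).sub (hMmeas n)).indicator (hBmeas n))
    -- cross term vanishes
    have hcross : ∀ n, ∫ ω, S n ω * D n ω ∂μ = 0 := by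
      intro n
      set f : Ω → ℝ := (B n).indicator (S n) with hf
      have hfmeasF : Measurable[erwFil η (n + 1)] f := by
        letI : MeasurableSpace Ω := erwFil η (n + 1)
        exact (hSmeasF n).indicator (hBmeasF n)
      have hfmeas : Measurable f := hfmeasF.mono (erwFil_le h.meas _) le_rfl
      have hfbd : ∀ ω, |f ω| ≤ b + 2 := by
        intro ω
        by_cases hω : ω ∈ B n
        · rw [hf]; simp only [Set.indicator_of_mem hω]; exact hSbd n ω
        · rw [hf]; simp only [Set.indicator_of_notMem hω, abs_zero]; linarith
      have hfeq : ∀ ω, S n ω * D n ω = f ω * (M (n + 1) ω - M n ω) := by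
        intro ω
        by_cases hω : ω ∈ B n
        · rw [hf, hD]; simp [Set.indicator_of_mem hω]
        · rw [hf, hD]; simp [Set.indicator_of_notMem hω]
      have hpull := integral_mul_eta h (n := n + 1) (by omega) hfmeasF hfbd
      set gd : Ω → ℝ := fun ω => (2 * p - 1) * erwX η (n + 1) ω / ((n + 1 : ℕ) : ℝ) with hgd
      have hgdbd : ∀ ω, |gd ω| ≤ 1 := fun ω => (hgbd n ω).trans (by linarith)
      have hgdmeas : Measurable gd :=
        (measurable_const.mul (measurable_X h.meas (n + 1))).div measurable_const
      have hfeq2 : ∀ ω, f ω * (M (n + 1) ω - M n ω) =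
          (erwA p (n + 1))⁻¹ * (f ω * η (n + 2) ω - f ω * gd ω) := by
        intro ω
        rw [hΔ n ω, hgd]
        field_simp
      have hint1 : Integrable (fun ω => f ω * η (n + 2) ω) μ := by
        refine integrable_of_bound (hfmeas.mul (h.meas _)) (b + 2) fun ω => ?_
        rw [abs_mul]
        calc |f ω| * |η (n + 2) ω| ≤ (b + 2) * 1 :=
              mul_le_mul (hfbd ω) (abs_eta_le h.pm (by omega) ω) (abs_nonneg _) (by linarith)
          _ = b + 2 := mul_one _
      have hint2 : Integrable (fun ω => f ω * gd ω) μ := by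
        refine integrable_of_bound (hfmeas.mul hgdmeas) (b + 2) fun ω => ?_
        rw [abs_mul]
        calc |f ω| * |gd ω| ≤ (b + 2) * 1 :=
              mul_le_mul (hfbd ω) (hgdbd ω) (abs_nonneg _) (by linarith)
          _ = b + 2 := mul_one _
      calc ∫ ω, S n ω * D n ω ∂μ
          = ∫ ω, (erwA p (n + 1))⁻¹ * (f ω * η (n + 2) ω - f ω * gd ω) ∂μ := by
            simp only [hfeq, hfeq2]
        _ = (erwA p (n + 1))⁻¹ * ∫ ω, (f ω * η (n + 2) ω - f ω * gd ω) ∂μ :=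
            integral_const_mul _ _
        _ = (erwA p (n + 1))⁻¹ *
            ((∫ ω, f ω * η (n + 2) ω ∂μ) - ∫ ω, f ω * gd ω ∂μ) := by
            rw [integral_sub hint1 hint2]
        _ = 0 := by
            rw [hpull]
            simp [hgd]
    -- second moment recursion and variance lower bound
    have hSsqint : ∀ n, Integrable (fun ω => (S n ω) ^ 2) μ := by
      intro n
      refine integrable_of_bound ((hSmeas n).pow_const 2) ((b + 2) ^ 2) fun ω => ?_
      rw [abs_pow]
      have := hSbd n ω
      have h0 : (0:ℝ) ≤ |S n ω| := abs_nonneg _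
      nlinarith
    have hDsqint : ∀ n, Integrable (fun ω => (D n ω) ^ 2) μ := by
      intro n
      refine integrable_of_bound ((hDmeas n).pow_const 2) 4 fun ω => ?_
      rw [abs_pow]
      have := hDbd n ω
      have h0 : (0:ℝ) ≤ |D n ω| := abs_nonneg _
      nlinarith
    have hSDint : ∀ n, Integrable (fun ω => S n ω * D n ω) μ := by
      intro n
      refine integrable_of_bound ((hSmeas n).mul (hDmeas n)) ((b + 2) * 2) fun ω => ?_
      rw [abs_mul]
      exact mul_le_mul (hSbd n ω) (hDbd n ω) (abs_nonneg _) (by linarith)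
    have hmom : ∀ n, ∫ ω, (S (n + 1) ω) ^ 2 ∂μ =
        ∫ ω, (S n ω) ^ 2 ∂μ + ∫ ω, (D n ω) ^ 2 ∂μ := by
      intro n
      have hexp : ∀ ω, (S (n + 1) ω) ^ 2 =
          ((S n ω) ^ 2 + (D n ω) ^ 2) + 2 * (S n ω * D n ω) := by
        intro ω; rw [hSsucc]; ring
      calc ∫ ω, (S (n + 1) ω) ^ 2 ∂μ
          = ∫ ω, (((S n ω) ^ 2 + (D n ω) ^ 2) + 2 * (S n ω * D n ω)) ∂μ := by
            simp only [hexp]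
        _ = (∫ ω, ((S n ω) ^ 2 + (D n ω) ^ 2) ∂μ) + ∫ ω, 2 * (S n ω * D n ω) ∂μ :=
            integral_add ((hSsqint n).add (hDsqint n)) ((hSDint n).const_mul 2)
        _ = ∫ ω, (S n ω) ^ 2 ∂μ + ∫ ω, (D n ω) ^ 2 ∂μ := by
            rw [integral_add (hSsqint n) (hDsqint n), integral_const_mul, hcross n]
            ring
    -- variance lower bound
    have hvar : ∀ n : ℕ, 3 / 4 * (μ Cset).toReal / (8 * ((n : ℝ) + 1) + 6) ≤
        ∫ ω, (D n ω) ^ 2 ∂μ := by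
      intro n
      set A1 : ℝ := erwA p (n + 1) with hA1
      have hA1pos : 0 < A1 := erwA_pos hp1 (n + 1)
      set gd : Ω → ℝ := fun ω => (2 * p - 1) * erwX η (n + 1) ω / ((n + 1 : ℕ) : ℝ) with hgd
      have hgdbd : ∀ ω, |gd ω| ≤ 2 * p - 1 := fun ω => hgbd n ω
      have hgdbd1 : ∀ ω, |gd ω| ≤ 1 := fun ω => (hgbd n ω).trans (by linarith)
      have hgdmeasF : Measurable[erwFil η (n + 1)] gd := by
        letI : MeasurableSpace Ω := erwFil η (n + 1)
        exact (measurable_const.mul (measurable_X_fil (n + 1))).div measurable_const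
      have hgdmeas : Measurable gd := hgdmeasF.mono (erwFil_le h.meas _) le_rfl
      -- pointwise expansion of the squared increment
      have hexp : ∀ ω, (D n ω) ^ 2 = A1⁻¹ ^ 2 *
          ((B n).indicator (fun _ => (1 : ℝ)) ω -
            2 * ((B n).indicator gd ω * η (n + 2) ω) +
            (B n).indicator (fun ω' => (gd ω') ^ 2) ω) := by
        intro ω
        by_cases hω : ω ∈ B n
        · rw [hD]
          simp only [Set.indicator_of_mem hω]
          rw [hΔ n ω]
          have hη2 : (η (n + 2) ω) ^ 2 = 1 := by
            rcases h.pm (n + 2) (by omega) ω with hh | hh <;> rw [hh] <;> norm_num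
          rw [div_pow, sub_sq, hη2]
          simp only [hgd, hA1]
          field_simp
        · rw [hD]
          simp [Set.indicator_of_notMem hω]
      -- integrability of the pieces
      have hind1 : Integrable ((B n).indicator (fun _ => (1 : ℝ))) μ := by
        refine integrable_of_bound (measurable_const.indicator (hBmeas n)) 1 fun ω => ?_
        by_cases hω : ω ∈ B n <;>
          simp [Set.indicator_of_mem, Set.indicator_of_notMem, hω]
      have hind2 : Integrable (fun ω => (B n).indicator gd ω * η (n + 2) ω) μ := by
        refine integrable_of_bound ((hgdmeas.indicator (hBmeas n)).mul (h.meas _)) 1 fun ω => ?_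
        rw [abs_mul]
        have hg1 : |(B n).indicator gd ω| ≤ 1 := by
          by_cases hω : ω ∈ B n
          · rw [Set.indicator_of_mem hω]; exact hgdbd1 ω
          · rw [Set.indicator_of_notMem hω]; simp
        calc |(B n).indicator gd ω| * |η (n + 2) ω| ≤ 1 * 1 :=
              mul_le_mul hg1 (abs_eta_le h.pm (by omega) ω) (abs_nonneg _) zero_le_one
          _ = 1 := one_mul _
      have hind3 : Integrable ((B n).indicator (fun ω' => (gd ω') ^ 2)) μ := by
        refine integrable_of_bound ((hgdmeas.pow_const 2).indicator (hBmeas n)) 1 fun ω => ?_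
        by_cases hω : ω ∈ B n
        · rw [Set.indicator_of_mem hω, abs_pow]
          have := hgdbd1 ω
          nlinarith [abs_nonneg (gd ω)]
        · rw [Set.indicator_of_notMem hω]; simp
      -- the pull-out property kills the cross term
      have hpull2 : ∫ ω, (B n).indicator gd ω * η (n + 2) ω ∂μ =
          ∫ ω, (B n).indicator gd ω * gd ω ∂μ := by
        have hfmeasF : Measurable[erwFil η (n + 1)] ((B n).indicator gd) := by
          letI : MeasurableSpace Ω := erwFil η (n + 1)
          exact hgdmeasF.indicator (hBmeasF n)
        have hfbd : ∀ ω, |(B n).indicator gd ω| ≤ 1 := by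
          intro ω
          by_cases hω : ω ∈ B n
          · rw [Set.indicator_of_mem hω]; exact hgdbd1 ω
          · rw [Set.indicator_of_notMem hω]; simp
        exact integral_mul_eta h (n := n + 1) (by omega) hfmeasF hfbd
      have hi3eq : ∀ ω, (B n).indicator gd ω * gd ω =
          (B n).indicator (fun ω' => (gd ω') ^ 2) ω := by
        intro ω
        by_cases hω : ω ∈ B n <;>
          simp [Set.indicator_of_mem, Set.indicator_of_notMem, hω, sq]
      set I2 : ℝ := ∫ ω, (B n).indicator (fun ω' => (gd ω') ^ 2) ω ∂μ with hI2
      have step1 : ∫ ω, (D n ω) ^ 2 ∂μ =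
          A1⁻¹ ^ 2 * ((μ (B n)).toReal - 2 * I2 + I2) := by
        calc ∫ ω, (D n ω) ^ 2 ∂μ
            = ∫ ω, A1⁻¹ ^ 2 *
              ((B n).indicator (fun _ => (1 : ℝ)) ω -
                2 * ((B n).indicator gd ω * η (n + 2) ω) +
                (B n).indicator (fun ω' => (gd ω') ^ 2) ω) ∂μ := by
              simp only [hexp]
          _ = A1⁻¹ ^ 2 * ∫ ω,
              ((B n).indicator (fun _ => (1 : ℝ)) ω -
                2 * ((B n).indicator gd ω * η (n + 2) ω) +
                (B n).indicator (fun ω' => (gd ω') ^ 2) ω) ∂μ := integral_const_mul _ _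
          _ = A1⁻¹ ^ 2 * ((μ (B n)).toReal - 2 * I2 + I2) := by
              have hsplit := integral_add (μ := μ)
                (f := fun ω => (B n).indicator (fun _ => (1 : ℝ)) ω -
                  2 * ((B n).indicator gd ω * η (n + 2) ω))
                (g := fun ω => (B n).indicator (fun ω' => (gd ω') ^ 2) ω)
                (hind1.sub (hind2.const_mul 2)) hind3
              have hsub := integral_sub (μ := μ)
                (f := fun ω => (B n).indicator (fun _ => (1 : ℝ)) ω)
                (g := fun ω => 2 * ((B n).indicator gd ω * η (n + 2) ω))
                hind1 (hind2.const_mul 2)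
              have hmul := integral_const_mul (μ := μ) (2 : ℝ)
                (fun ω => (B n).indicator gd ω * η (n + 2) ω)
              have e1 : ∫ ω, (B n).indicator (fun _ => (1 : ℝ)) ω ∂μ = (μ (B n)).toReal := by
                have := integral_indicator_one (μ := μ) (hBmeas n)
                exact this
              have e2 : ∫ ω, (B n).indicator gd ω * gd ω ∂μ = I2 := by
                rw [hI2]
                exact integral_congr_ae (Eventually.of_forall hi3eq)
              rw [hsplit, hsub, hmul, hpull2, e1, e2]
      -- bounding the terms
      have hI2le : I2 ≤ 1 / 4 * (μ (B n)).toReal := by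
        have hpt : ∀ ω, (B n).indicator (fun ω' => (gd ω') ^ 2) ω ≤
            1 / 4 * (B n).indicator (fun _ => (1 : ℝ)) ω := by
          intro ω
          by_cases hω : ω ∈ B n
          · simp only [Set.indicator_of_mem hω]
            have h1 := hgdbd ω
            have h2 : |gd ω| ≤ 1 / 2 := h1.trans (by linarith)
            nlinarith [abs_nonneg (gd ω), sq_abs (gd ω)]
          · simp [Set.indicator_of_notMem hω]
        calc I2 ≤ ∫ ω, 1 / 4 * (B n).indicator (fun _ => (1 : ℝ)) ω ∂μ :=
              integral_mono hind3 (hind1.const_mul _) hpt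
          _ = 1 / 4 * (μ (B n)).toReal := by
              rw [integral_const_mul]
              congr 1
              have := integral_indicator_one (μ := μ) (hBmeas n)
              exact this
      have hCle : (μ Cset).toReal ≤ (μ (B n)).toReal :=
        ENNReal.toReal_mono (measure_ne_top μ _) (measure_mono (hCB n))
      have hC0 : 0 ≤ (μ Cset).toReal := ENNReal.toReal_nonneg
      have hA1sq : A1 ^ 2 ≤ 8 * ((n : ℝ) + 1) + 6 := by
        have := erwA_sq_le hp1 hp2 (n + 1)
        rw [hA1]
        push_cast at this ⊢
        linarith
      have hden : (0 : ℝ) < 8 * ((n : ℝ) + 1) + 6 := by positivity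
      have hinv : 1 / (8 * ((n : ℝ) + 1) + 6) ≤ A1⁻¹ ^ 2 := by
        rw [inv_pow, ← one_div]
        exact one_div_le_one_div_of_le (by positivity) hA1sq
      have hmain : 3 / 4 * (μ Cset).toReal ≤ (μ (B n)).toReal - 2 * I2 + I2 := by
        linarith
      calc 3 / 4 * (μ Cset).toReal / (8 * ((n : ℝ) + 1) + 6)
          = 1 / (8 * ((n : ℝ) + 1) + 6) * (3 / 4 * (μ Cset).toReal) := by ring
        _ ≤ A1⁻¹ ^ 2 * ((μ (B n)).toReal - 2 * I2 + I2) :=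
            mul_le_mul hinv hmain (by positivity) (by positivity)
        _ = ∫ ω, (D n ω) ^ 2 ∂μ := step1.symm
    -- telescoping
    have htel : ∀ n : ℕ, ∫ ω, (S n ω) ^ 2 ∂μ =
        ∫ ω, (S 0 ω) ^ 2 ∂μ + ∑ k ∈ Finset.range n, ∫ ω, (D k ω) ^ 2 ∂μ := by
      intro n
      induction n with
      | zero => simp
      | succ n ih => rw [hmom n, ih, Finset.sum_range_succ]; ring
    have hSub : ∀ n : ℕ, ∫ ω, (S n ω) ^ 2 ∂μ ≤ (b + 2) ^ 2 := by
      intro n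
      calc ∫ ω, (S n ω) ^ 2 ∂μ ≤ ∫ _ω, (b + 2) ^ 2 ∂μ := by
            refine integral_mono (hSsqint n) (integrable_const _) fun ω => ?_
            have h1 := hSbd n ω
            nlinarith [abs_nonneg (S n ω), sq_abs (S n ω)]
        _ = (b + 2) ^ 2 := by simp
    have hsum : ∀ n : ℕ,
        ∑ k ∈ Finset.range n, 3 / 4 * (μ Cset).toReal / (8 * ((k : ℝ) + 1) + 6) ≤
          (b + 2) ^ 2 := by
      intro n
      have h1 : ∑ k ∈ Finset.range n, 3 / 4 * (μ Cset).toReal / (8 * ((k : ℝ) + 1) + 6) ≤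
          ∑ k ∈ Finset.range n, ∫ ω, (D k ω) ^ 2 ∂μ :=
        Finset.sum_le_sum fun k _ => hvar k
      have h2 : 0 ≤ ∫ ω, (S 0 ω) ^ 2 ∂μ := integral_nonneg fun ω => sq_nonneg _
      have h3 := htel n
      have h4 := hSub n
      linarith
    by_contra hne
    have htpos : 0 < (μ Cset).toReal := ENNReal.toReal_pos hne (measure_ne_top μ _)
    set t := (μ Cset).toReal with ht
    have hterm : ∀ k : ℕ, 3 / 56 * t * (1 / ((k : ℝ) + 1)) ≤
        3 / 4 * t / (8 * ((k : ℝ) + 1) + 6) := by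
      intro k
      have hk0 : (0 : ℝ) < (k : ℝ) + 1 := by positivity
      have heq : 3 / 56 * t * (1 / ((k : ℝ) + 1)) = 3 / 4 * t / (14 * ((k : ℝ) + 1)) := by
        field_simp
        ring
      rw [heq]
      gcongr
      linarith
    have hmulsum : (fun n : ℕ => ∑ k ∈ Finset.range n, 3 / 56 * t * (1 / ((k : ℝ) + 1))) =
        fun n : ℕ => 3 / 56 * t * ∑ k ∈ Finset.range n, 1 / ((k : ℝ) + 1) := by
      funext n
      rw [Finset.mul_sum]
    have hdiv : Tendsto (fun n : ℕ => ∑ k ∈ Finset.range n, 3 / 56 * t * (1 / ((k : ℝ) + 1)))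
        atTop atTop := by
      rw [hmulsum]
      exact Tendsto.const_mul_atTop (by positivity)
        Real.tendsto_sum_range_one_div_nat_succ_atTop
    have hdiv2 : Tendsto
        (fun n : ℕ => ∑ k ∈ Finset.range n, 3 / 4 * t / (8 * ((k : ℝ) + 1) + 6))
        atTop atTop :=
      tendsto_atTop_mono (fun n => Finset.sum_le_sum fun k _ => hterm k) hdiv
    obtain ⟨n, hn⟩ := (hdiv2.eventually_gt_atTop ((b + 2) ^ 2)).exists
    exact absurd (hsum n) (not_le.mpr hn)
  -- a.e. unboundedness of |M|
  have hunbdd : ∀ᵐ ω ∂μ, ∀ j : ℕ, ∃ k, (j : ℝ) + 1 ≤ |M k ω| := by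
    rw [ae_all_iff]
    intro j
    have := hhit ((j : ℝ) + 1) (by push_cast; linarith [Nat.cast_nonneg (α := ℝ) j])
    rw [ae_iff]
    convert this using 2
    ext ω
    simp [not_forall, not_le, not_exists, not_lt]
  -- dichotomy
  have hdich := hmart.bddAbove_range_iff_bddBelow_range (R := 2)
    (Eventually.of_forall fun ω i => hjump i ω)
  filter_upwards [hunbdd, hdich] with ω hub hiff
  -- neither bounded above nor below
  have hnab : ¬ BddAbove (Set.range fun n => M n ω) := by
    intro hab
    have hbb : BddBelow (Set.range fun n => M n ω) := hiff.mp hab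
    obtain ⟨u, hu⟩ := hab
    obtain ⟨l, hl⟩ := hbb
    obtain ⟨k, hk⟩ := hub ⌈|u| ⊔ |l|⌉₊
    have h1 : M k ω ≤ |u| := le_trans (hu ⟨k, rfl⟩) (le_abs_self u)
    have h2 : -|l| ≤ M k ω := le_trans (neg_abs_le l) (hl ⟨k, rfl⟩)
    have h3 : |M k ω| ≤ |u| ⊔ |l| := abs_le.mpr ⟨le_trans (by simp) h2, le_trans h1 (by simp)⟩
    have h4 : (|u| ⊔ |l|) ≤ (⌈|u| ⊔ |l|⌉₊ : ℝ) := Nat.le_ceil _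
    linarith
  have hnbb : ¬ BddBelow (Set.range fun n => M n ω) := fun hbb => hnab (hiff.mpr hbb)
  -- conclusion: infinitely many zeros
  intro N
  -- find i ≥ N with X (i+1) > 0
  have hpos : ∃ i, N ≤ i ∧ 0 < erwX η (i + 1) ω := by
    rw [not_bddAbove_iff] at hnab
    obtain ⟨y, ⟨n, rfl⟩, hy⟩ :=
      hnab (((Finset.range (N + 1)).sup' (by simp) fun k => M k ω) ⊔ 0)
    have hn : N + 1 ≤ n := by
      by_contra hcon
      push_neg at hcon
      have h1 : M n ω ≤ (Finset.range (N + 1)).sup' (by simp) fun k => M k ω :=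
        by exact Finset.le_sup' (fun k => M k ω) (Finset.mem_range.mpr hcon)
      have h2 : ((Finset.range (N + 1)).sup' (by simp) fun k => M k ω) ≤
          ((Finset.range (N + 1)).sup' (by simp) fun k => M k ω) ⊔ 0 := le_sup_left
      linarith
    refine ⟨n, by omega, ?_⟩
    have hMn : 0 < M n ω := lt_of_le_of_lt le_sup_right hy
    have hA := erwA_pos hp1 n
    have hXe : M n ω * erwA p n = erwX η (n + 1) ω := by
      rw [hM]; field_simp
    nlinarith
  obtain ⟨i, hiN, hipos⟩ := hpos
  have hneg : ∃ j, i + 1 ≤ j ∧ erwX η (j + 1) ω < 0 := by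
    rw [not_bddBelow_iff] at hnbb
    obtain ⟨y, ⟨n, rfl⟩, hy⟩ :=
      hnbb (((Finset.range (i + 2)).inf' (by simp) fun k => M k ω) ⊓ 0)
    have hn : i + 2 ≤ n := by
      by_contra hcon
      push_neg at hcon
      have h1 : ((Finset.range (i + 2)).inf' (by simp) fun k => M k ω) ≤ M n ω :=
        by exact Finset.inf'_le (fun k => M k ω) (Finset.mem_range.mpr hcon)
      have h2 : ((Finset.range (i + 2)).inf' (by simp) fun k => M k ω) ⊓ 0 ≤
          ((Finset.range (i + 2)).inf' (by simp) fun k => M k ω) := inf_le_left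
      linarith
    refine ⟨n, by omega, ?_⟩
    have hMn : M n ω < 0 := lt_of_lt_of_le hy inf_le_right
    have hA := erwA_pos hp1 n
    have hXe : M n ω * erwA p n = erwX η (n + 1) ω := by
      rw [hM]; field_simp
    nlinarith
  obtain ⟨j, hji, hjneg⟩ := hneg
  obtain ⟨k, hk1, hk2, hk0⟩ := exists_zero_between h.pm (by omega : i + 1 ≤ j + 1) hipos hjneg
  exact ⟨k, by omega, hk0⟩

end CaseD

/-- For the ERW with `p ≤ 3/4`, almost surely `Xₙ = 0` for infinitely many `n`:
the elephant random walk is recurrent. -/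
theorem erw_recurrent
    {Ω : Type*} [MeasurableSpace Ω] {μ : Measure Ω} {p r : ℝ} {η : ℕ → Ω → ℝ}
    (h : IsERW μ p r η) (hp : p ≤ 3 / 4) :
    ∀ᵐ ω ∂μ, {n : ℕ | erwX η n ω = 0}.Infinite := by
  have key : ∀ᵐ ω ∂μ, ∀ N : ℕ, ∃ n, N ≤ n ∧ erwX η n ω = 0 := by
    rcases le_or_gt p (1 / 2) with hple | hpgt
    · rw [ae_all_iff]
      intro N
      have hN := case_le_half h hple (N := N + 1) (by omega)
      filter_upwards [hN] with ω hω
      obtain ⟨n, hn1, hn2⟩ := hω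
      exact ⟨n, by omega, hn2⟩
    · exact case_gt_half h hpgt.le hp
  filter_upwards [key] with ω hω
  refine Set.infinite_of_not_bddAbove ?_
  rintro ⟨m, hm⟩
  obtain ⟨n, hn1, hn2⟩ := hω (m + 1)
  have hle : n ≤ m := hm hn2
  omega
end

section
/- For the uniform-memory elephant random walk defined by the explicit construction, for every n ≥ 1 and every e ∈ {−1,1}, almost surely P(η_{n+1} = e | η_1, …, η_n) = (1/(2n)) Σ_{k=1}^{n} [1 + (2p−1) η_k e]. -/
open MeasureTheory Filter

/-- Index type for the independent sources of randomness of the explicit construction: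
the first step `η 1`, the uniform memory indices `(K n)_{n ≥ 1}` and the
copy/flip variables `(β n)_{n ≥ 2}`. -/
def ERWSourceIdx : Type := Unit ⊕ {n : ℕ // 1 ≤ n} ⊕ {n : ℕ // 2 ≤ n}

/-- Codomains of the independent sources of randomness. -/
def ERWSourceCodom : ERWSourceIdx → Type
  | .inl _ => ℝ
  | .inr (.inl _) => ℕ
  | .inr (.inr _) => ℝ

instance ERWSourceCodomMS : ∀ i, MeasurableSpace (ERWSourceCodom i)
  | .inl _ => Real.measurableSpace
  | .inr (.inl _) => inferInstanceAs (MeasurableSpace ℕ)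
  | .inr (.inr _) => Real.measurableSpace

/-- The family of independent sources of randomness, built from `η 1`, `K` and `β`. -/
def erwSources {Ω : Type*} (η : ℕ → Ω → ℝ) (K : ℕ → Ω → ℕ) (β : ℕ → Ω → ℝ) :
    ∀ i : ERWSourceIdx, Ω → ERWSourceCodom i
  | .inl _ => η 1
  | .inr (.inl n) => K n.1
  | .inr (.inr n) => β n.1

/-- Indices of sources used to build `η 1, …, η n`. -/
def erwIdxLe : ℕ → ERWSourceIdx → Prop
  | _, .inl _ => True
  | n, .inr (.inl m) => m.1 < n
  | n, .inr (.inr m) => m.1 ≤ n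

/-- σ-algebra generated by the sources with index at most `n`. -/
noncomputable def erwPast {Ω : Type*} (η : ℕ → Ω → ℝ) (K : ℕ → Ω → ℕ) (β : ℕ → Ω → ℝ)
    (n : ℕ) : MeasurableSpace Ω :=
  ⨆ i ∈ {i | erwIdxLe n i}, MeasurableSpace.comap (erwSources η K β i) (ERWSourceCodomMS i)

lemma erwPast_comap_le {Ω : Type*} (η : ℕ → Ω → ℝ) (K : ℕ → Ω → ℕ) (β : ℕ → Ω → ℝ)
    (n : ℕ) (i : ERWSourceIdx) (hi : erwIdxLe n i) :
    MeasurableSpace.comap (erwSources η K β i) (ERWSourceCodomMS i) ≤ erwPast η K β n :=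
  le_iSup₂ (f := fun i (_ : i ∈ {i | erwIdxLe n i}) =>
    MeasurableSpace.comap (erwSources η K β i) (ERWSourceCodomMS i)) i hi

lemma erwIdxLe_mono {m n : ℕ} (h : m ≤ n) {i : ERWSourceIdx} (hi : erwIdxLe m i) :
    erwIdxLe n i := by
  match i with
  | .inl _ => trivial
  | .inr (.inl j) => exact lt_of_lt_of_le hi h
  | .inr (.inr j) => exact le_trans hi h

lemma erwPast_mono {Ω : Type*} (η : ℕ → Ω → ℝ) (K : ℕ → Ω → ℕ) (β : ℕ → Ω → ℝ)
    {m n : ℕ} (h : m ≤ n) : erwPast η K β m ≤ erwPast η K β n :=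
  iSup₂_le fun i hi => erwPast_comap_le η K β n i (erwIdxLe_mono h hi)

lemma measurable_eta_erwPast {Ω : Type*} (η : ℕ → Ω → ℝ) (K : ℕ → Ω → ℕ) (β : ℕ → Ω → ℝ)
    (hKrange : ∀ n, 1 ≤ n → ∀ ω, K n ω ∈ Finset.Icc 1 n)
    (hrec : ∀ n, 1 ≤ n → ∀ ω, η (n + 1) ω = β (n + 1) ω * η (K n ω) ω) :
    ∀ k, 1 ≤ k → Measurable[erwPast η K β k] (η k) := by
  intro k
  induction k using Nat.strong_induction_on with
  | _ k ih =>
    match k with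
    | 0 => intro h; exact absurd h (by omega)
    | 1 =>
      intro _
      exact measurable_iff_comap_le.2 (erwPast_comap_le η K β 1 (.inl ()) trivial)
    | (m + 2) =>
      intro _
      have hm1 : 1 ≤ m + 1 := Nat.le_add_left 1 m
      have heq : η (m + 2) = fun ω =>
          β (m + 2) ω * ∑ j ∈ Finset.Icc 1 (m + 1), (if K (m + 1) ω = j then η j ω else 0) := by
        funext ω
        rw [hrec (m + 1) hm1 ω]
        congr 1
        rw [Finset.sum_ite_eq (Finset.Icc 1 (m + 1)) (K (m + 1) ω) (fun j => η j ω),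
          if_pos (hKrange (m + 1) hm1 ω)]
      rw [heq]
      have hβ : Measurable[erwPast η K β (m + 2)] (β (m + 2)) :=
        measurable_iff_comap_le.2 (erwPast_comap_le η K β (m + 2)
          (.inr (.inr ⟨m + 2, by omega⟩)) (by show m + 2 ≤ m + 2; omega))
      have hK : Measurable[erwPast η K β (m + 2)] (K (m + 1)) :=
        measurable_iff_comap_le.2 (erwPast_comap_le η K β (m + 2)
          (.inr (.inl ⟨m + 1, hm1⟩)) (by show m + 1 < m + 2; omega))
      refine hβ.mul (Finset.measurable_sum _ fun j hj => Measurable.ite ?_ ?_ measurable_const)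
      · exact hK (MeasurableSet.singleton j)
      · have hj' : j < m + 2 := by
          have := (Finset.mem_Icc.1 hj).2; omega
        have hj1 : 1 ≤ j := (Finset.mem_Icc.1 hj).1
        exact (ih j hj' hj1).mono (erwPast_mono η K β (by omega)) le_rfl

lemma erwFil_le_erwPast {Ω : Type*} (η : ℕ → Ω → ℝ) (K : ℕ → Ω → ℕ) (β : ℕ → Ω → ℝ)
    (hKrange : ∀ n, 1 ≤ n → ∀ ω, K n ω ∈ Finset.Icc 1 n)
    (hrec : ∀ n, 1 ≤ n → ∀ ω, η (n + 1) ω = β (n + 1) ω * η (K n ω) ω)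
    (n : ℕ) : erwFil η n ≤ erwPast η K β n := by
  refine iSup₂_le fun k hk => ?_
  have hk1 : 1 ≤ k := (Finset.mem_Icc.1 hk).1
  have hkn : k ≤ n := (Finset.mem_Icc.1 hk).2
  exact measurable_iff_comap_le.1
    ((measurable_eta_erwPast η K β hKrange hrec k hk1).mono (erwPast_mono η K β hkn) le_rfl)

lemma erw_indep_mul {Ω : Type*} [MeasurableSpace Ω] {μ : Measure Ω} [IsProbabilityMeasure μ]
    (η : ℕ → Ω → ℝ) (K : ℕ → Ω → ℕ) (β : ℕ → Ω → ℝ)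
    (hηm : ∀ k, Measurable (η k)) (hKm : ∀ n, Measurable (K n)) (hβm : ∀ n, Measurable (β n))
    (hindep : ProbabilityTheory.iIndepFun (erwSources η K β) μ)
    (n : ℕ) (hn : 1 ≤ n) {A : Set Ω} (hA : MeasurableSet[erwPast η K β n] A) (k : ℕ) (c : ℝ) :
    μ (A ∩ ({ω | K n ω = k} ∩ {ω | β (n + 1) ω = c})) =
      μ A * (μ {ω | K n ω = k} * μ {ω | β (n + 1) ω = c}) := by
  have hnn : 2 ≤ n + 1 := by omega
  have h_le : ∀ i, MeasurableSpace.comap (erwSources η K β i) (ERWSourceCodomMS i) ≤ ‹_› := by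
    intro i
    match i with
    | .inl _ => exact (hηm 1).comap_le
    | .inr (.inl j) => exact (hKm j.1).comap_le
    | .inr (.inr j) => exact (hβm j.1).comap_le
  have hab : (Sum.inr (Sum.inl ⟨n, hn⟩) : ERWSourceIdx) ≠ Sum.inr (Sum.inr ⟨n + 1, hnn⟩) := by
    intro h
    exact absurd (Sum.inr.inj h) (by simp)
  have hST : Disjoint {i | erwIdxLe n i}
      ({Sum.inr (Sum.inl ⟨n, hn⟩), Sum.inr (Sum.inr ⟨n + 1, hnn⟩)} : Set ERWSourceIdx) := by
    rw [Set.disjoint_right]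
    intro i hi hS
    obtain rfl | rfl : i = _ ∨ i = _ := hi
    · have h' : n < n := hS; omega
    · have h' : n + 1 ≤ n := hS; omega
  have hIndep : ProbabilityTheory.Indep (erwPast η K β n)
      (⨆ i ∈ ({Sum.inr (Sum.inl ⟨n, hn⟩), Sum.inr (Sum.inr ⟨n + 1, hnn⟩)} : Set ERWSourceIdx),
        MeasurableSpace.comap (erwSources η K β i) (ERWSourceCodomMS i)) μ :=
    ProbabilityTheory.indep_iSup_of_disjoint h_le hindep.iIndep hST
  set MT := ⨆ i ∈ ({Sum.inr (Sum.inl ⟨n, hn⟩), Sum.inr (Sum.inr ⟨n + 1, hnn⟩)} :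
      Set ERWSourceIdx), MeasurableSpace.comap (erwSources η K β i) (ERWSourceCodomMS i) with hMT
  have hKle : MeasurableSpace.comap (K n) inferInstance ≤ MT := by
    rw [hMT]
    exact le_iSup₂ (f := fun i (_ : i ∈ _) =>
      MeasurableSpace.comap (erwSources η K β i) (ERWSourceCodomMS i))
      (Sum.inr (Sum.inl ⟨n, hn⟩)) (Set.mem_insert _ _)
  have hβle : MeasurableSpace.comap (erwSources η K β (Sum.inr (Sum.inr ⟨n + 1, hnn⟩)))
      (ERWSourceCodomMS (Sum.inr (Sum.inr ⟨n + 1, hnn⟩))) ≤ MT := by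
    rw [hMT]
    exact le_iSup₂ (f := fun i (_ : i ∈ _) =>
      MeasurableSpace.comap (erwSources η K β i) (ERWSourceCodomMS i))
      (Sum.inr (Sum.inr ⟨n + 1, hnn⟩)) (Or.inr rfl)
  have hKmeas : MeasurableSet[MT] {ω | K n ω = k} :=
    hKle _ ⟨{k}, MeasurableSet.singleton k, rfl⟩
  have hβmeas : MeasurableSet[MT] {ω | β (n + 1) ω = c} :=
    hβle _ ⟨{c}, MeasurableSet.singleton c, rfl⟩
  have step1 := (ProbabilityTheory.Indep_iff _ _ μ).1 hIndep A _ hA (hKmeas.inter hβmeas)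
  have step2 : μ (K n ⁻¹' {k} ∩ β (n + 1) ⁻¹' {c}) =
      μ (K n ⁻¹' {k}) * μ (β (n + 1) ⁻¹' {c}) :=
    (hindep.indepFun hab).measure_inter_preimage_eq_mul {k} {c}
      (MeasurableSet.singleton k) (MeasurableSet.singleton c)
  rw [step1]
  congr 1

section
variable {Ω : Type*} [MeasurableSpace Ω] {μ : MeasureTheory.Measure Ω} [MeasureTheory.IsProbabilityMeasure μ]

lemma ae_pm_of_law (f : Ω → ℝ) (hf : Measurable f) (q : ℝ) (hq : q ∈ Set.Icc (0:ℝ) 1)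
    (h1 : μ {ω | f ω = 1} = ENNReal.ofReal q) (h2 : μ {ω | f ω = -1} = ENNReal.ofReal (1 - q)) :
    ∀ᵐ ω ∂μ, f ω = 1 ∨ f ω = -1 := by
  have hA : MeasurableSet {ω | f ω = 1} := hf (MeasurableSet.singleton 1)
  have hB : MeasurableSet {ω | f ω = -1} := hf (MeasurableSet.singleton (-1))
  have hdisj : Disjoint {ω | f ω = 1} {ω | f ω = -1} := by
    rw [Set.disjoint_left]
    intro ω h1' h2'
    simp only [Set.mem_setOf_eq] at h1' h2'
    norm_num [h1'] at h2'
  have hU : μ ({ω | f ω = 1} ∪ {ω | f ω = -1}) = 1 := by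
    rw [measure_union hdisj hB, h1, h2, ← ENNReal.ofReal_add hq.1 (by linarith [hq.2])]
    norm_num
  have hcompl : μ ({ω | f ω = 1} ∪ {ω | f ω = -1})ᶜ = 0 := by
    rw [measure_compl (hA.union hB) (measure_ne_top μ _), hU, measure_univ, tsub_self]
  rw [ae_iff]
  have hset : {ω | ¬(f ω = 1 ∨ f ω = -1)} = ({ω | f ω = 1} ∪ {ω | f ω = -1})ᶜ := by
    ext ω; simp [not_or]
  rw [hset]; exact hcompl

lemma ae_eta_pm (p r : ℝ) (hp : p ∈ Set.Icc (0:ℝ) 1) (hr : r ∈ Set.Icc (0:ℝ) 1)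
    (η : ℕ → Ω → ℝ) (K : ℕ → Ω → ℕ) (β : ℕ → Ω → ℝ)
    (hηm : ∀ k, Measurable (η k)) (hβm : ∀ n, Measurable (β n))
    (hη1 : μ {ω | η 1 ω = 1} = ENNReal.ofReal r ∧
      μ {ω | η 1 ω = -1} = ENNReal.ofReal (1 - r))
    (hKrange : ∀ n, 1 ≤ n → ∀ ω, K n ω ∈ Finset.Icc 1 n)
    (hβlaw : ∀ n, 2 ≤ n → μ {ω | β n ω = 1} = ENNReal.ofReal p ∧
      μ {ω | β n ω = -1} = ENNReal.ofReal (1 - p))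
    (hrec : ∀ n, 1 ≤ n → ∀ ω, η (n + 1) ω = β (n + 1) ω * η (K n ω) ω) :
    ∀ k, 1 ≤ k → ∀ᵐ ω ∂μ, η k ω = 1 ∨ η k ω = -1 := by
  intro k
  induction k using Nat.strong_induction_on with
  | _ k ih =>
    match k with
    | 0 => intro h; exact absurd h (by omega)
    | 1 => intro _; exact ae_pm_of_law (η 1) (hηm 1) r hr hη1.1 hη1.2
    | (m + 2) =>
      intro _
      have hβpm : ∀ᵐ ω ∂μ, β (m + 2) ω = 1 ∨ β (m + 2) ω = -1 :=
        ae_pm_of_law (β (m + 2)) (hβm _) p hp (hβlaw (m + 2) (by omega)).1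
          (hβlaw (m + 2) (by omega)).2
      have hall : ∀ᵐ ω ∂μ, ∀ j ∈ Finset.Icc 1 (m + 1), (η j ω = 1 ∨ η j ω = -1) := by
        rw [Filter.eventually_all_finset]
        intro j hj
        exact ih j (by have := (Finset.mem_Icc.1 hj).2; omega) (Finset.mem_Icc.1 hj).1
      filter_upwards [hβpm, hall] with ω hβω hηω
      rw [hrec (m + 1) (by omega) ω]
      rcases hβω with h1 | h1 <;> rcases hηω _ (hKrange (m + 1) (by omega) ω) with h2 | h2 <;>
        rw [h1, h2] <;> norm_num


end

open ProbabilityTheory in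
/-- Explicit construction of the uniform-memory ERW: `η 1`, `(K n)_{n ≥ 1}` and
`(β n)_{n ≥ 2}` mutually independent, `P(η 1 = 1) = r = 1 - P(η 1 = -1)`, `K n` uniform
on `{1, …, n}`, `P(β n = 1) = p = 1 - P(β n = -1)`, and `η (n+1) = β (n+1) * η (K n)`.
Then for every `n ≥ 1` and every `e ∈ {-1, 1}`, almost surely
`P(η (n+1) = e | η 1, …, η n) = (1/(2n)) ∑_{k=1}^{n} (1 + (2p-1) η k e)`. -/
theorem erw_explicit_conditional_probability
    {Ω : Type*} [MeasurableSpace Ω] (μ : Measure Ω) [IsProbabilityMeasure μ]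
    (p r : ℝ) (hp : p ∈ Set.Icc (0 : ℝ) 1) (hr : r ∈ Set.Icc (0 : ℝ) 1)
    (η : ℕ → Ω → ℝ) (K : ℕ → Ω → ℕ) (β : ℕ → Ω → ℝ)
    (hηm : ∀ k, Measurable (η k)) (hKm : ∀ n, Measurable (K n))
    (hβm : ∀ n, Measurable (β n))
    (hη1 : μ {ω | η 1 ω = 1} = ENNReal.ofReal r ∧
      μ {ω | η 1 ω = -1} = ENNReal.ofReal (1 - r))
    (hKrange : ∀ n, 1 ≤ n → ∀ ω, K n ω ∈ Finset.Icc 1 n)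
    (hKunif : ∀ n, 1 ≤ n → ∀ k ∈ Finset.Icc 1 n, μ {ω | K n ω = k} = 1 / n)
    (hβlaw : ∀ n, 2 ≤ n → μ {ω | β n ω = 1} = ENNReal.ofReal p ∧
      μ {ω | β n ω = -1} = ENNReal.ofReal (1 - p))
    (hindep : iIndepFun (erwSources η K β) μ)
    (hrec : ∀ n, 1 ≤ n → ∀ ω, η (n + 1) ω = β (n + 1) ω * η (K n ω) ω)
    (n : ℕ) (hn : 1 ≤ n) (e : ℝ) (he : e = 1 ∨ e = -1) :
    μ[Set.indicator {ω | η (n + 1) ω = e} (fun _ => (1 : ℝ))|erwFil η n] =ᵐ[μ]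
      fun ω => (1 / (2 * n)) * ∑ k ∈ Finset.Icc 1 n, (1 + (2 * p - 1) * η k ω * e) := by
  classical
  have hnR : (0:ℝ) < (n:ℝ) := by exact_mod_cast Nat.pos_of_ne_zero (by omega)
  have hnn : 2 ≤ n + 1 := by omega
  have hT : MeasurableSet {ω | η (n + 1) ω = e} := hηm (n + 1) (MeasurableSet.singleton e)
  have hmeas_e : ∀ (k : ℕ) (c : ℝ), MeasurableSet {ω | η k ω = c} :=
    fun k c => hηm k (MeasurableSet.singleton c)
  have hPast_le : erwPast η K β n ≤ ‹MeasurableSpace Ω› := by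
    refine iSup₂_le fun i _ => ?_
    match i with
    | .inl _ => exact (hηm 1).comap_le
    | .inr (.inl j) => exact (hKm j.1).comap_le
    | .inr (.inr j) => exact (hβm j.1).comap_le
  have hle : erwFil η n ≤ ‹MeasurableSpace Ω› :=
    (erwFil_le_erwPast η K β hKrange hrec n).trans hPast_le
  have hηfil : ∀ k ∈ Finset.Icc 1 n, Measurable[erwFil η n] (η k) := fun k hk =>
    measurable_iff_comap_le.2 (le_iSup₂ (f := fun k (_ : k ∈ Finset.Icc 1 n) =>
      MeasurableSpace.comap (η k) Real.measurableSpace) k hk)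
  have hee : e * e = 1 := by rcases he with rfl | rfl <;> norm_num
  have hene : e ≠ -e := by rcases he with rfl | rfl <;> norm_num
  have hpm_e : ∀ x : ℝ, (x = 1 ∨ x = -1) → x = e ∨ x = -e := by
    rcases he with rfl | rfl <;> rintro x (rfl | rfl) <;> norm_num
  have hpm : ∀ k, 1 ≤ k → ∀ᵐ ω ∂μ, η k ω = 1 ∨ η k ω = -1 :=
    ae_eta_pm p r hp hr η K β hηm hβm hη1 hKrange hβlaw hrec
  set g : Ω → ℝ :=
    fun ω => (1 / (2 * n)) * ∑ k ∈ Finset.Icc 1 n, (1 + (2 * p - 1) * η k ω * e) with hgdef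
  have hFint : ∀ k : ℕ, Integrable (fun ω =>
      (2 * p) * Set.indicator {ω | η k ω = e} (fun _ => (1:ℝ)) ω
      + (2 - 2 * p) * Set.indicator {ω | η k ω = -e} (fun _ => (1:ℝ)) ω) μ := fun k =>
    (((integrable_const (1:ℝ)).indicator (hηm k (MeasurableSet.singleton e))).const_mul _).add
      (((integrable_const (1:ℝ)).indicator (hηm k (MeasurableSet.singleton (-e)))).const_mul _)
  have hcongr : ∀ k, 1 ≤ k → (fun ω => 1 + (2 * p - 1) * η k ω * e) =ᵐ[μ]
      (fun ω => (2 * p) * Set.indicator {ω | η k ω = e} (fun _ => (1:ℝ)) ω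
        + (2 - 2 * p) * Set.indicator {ω | η k ω = -e} (fun _ => (1:ℝ)) ω) := by
    intro k hk
    filter_upwards [hpm k hk] with ω hω
    rcases hpm_e _ hω with hx | hx
    · have h1 : ω ∈ {ω | η k ω = e} := hx
      have h2 : ω ∉ {ω | η k ω = -e} := by
        simp only [Set.mem_setOf_eq, hx]; exact hene
      rw [Set.indicator_of_mem h1, Set.indicator_of_notMem h2, hx, mul_assoc, hee]
      ring
    · have h1 : ω ∉ {ω | η k ω = e} := by
        simp only [Set.mem_setOf_eq, hx]; exact fun h => hene h.symm
      have h2 : ω ∈ {ω | η k ω = -e} := hx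
      rw [Set.indicator_of_notMem h1, Set.indicator_of_mem h2, hx]
      have hre : (2 * p - 1) * -e * e = -((2 * p - 1) * (e * e)) := by ring
      rw [hre, hee]
      ring
  have hHint : ∀ k, 1 ≤ k → Integrable (fun ω => 1 + (2 * p - 1) * η k ω * e) μ := fun k hk =>
    (hFint k).congr (hcongr k hk).symm
  have hg_int : Integrable g μ :=
    (integrable_finset_sum _ fun k hk => hHint k (Finset.mem_Icc.1 hk).1).const_mul _
  have hg_meas : Measurable[erwFil η n] g := by
    refine Measurable.const_mul ?_ _
    exact Finset.measurable_sum _ fun k hk =>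
      measurable_const.add (((hηfil k hk).const_mul _).mul_const _)
  have hf_int : Integrable (Set.indicator {ω | η (n + 1) ω = e} (fun _ => (1:ℝ))) μ :=
    (integrable_const (1:ℝ)).indicator hT
  have hgm : AEStronglyMeasurable[erwFil η n] g μ :=
    StronglyMeasurable.aestronglyMeasurable hg_meas.stronglyMeasurable
  refine (ae_eq_condExp_of_forall_setIntegral_eq hle hf_int
    (fun s _ _ => hg_int.integrableOn) ?_ hgm).symm
  intro s hs _
  have hs0 : MeasurableSet s := hle s hs
  have h1n : (1 / (n:ENNReal)) ≠ ⊤ := by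
    rw [one_div]; exact ENNReal.inv_ne_top.2 (Nat.cast_ne_zero.2 (by omega))
  have hsPast : MeasurableSet[erwPast η K β n] s := erwFil_le_erwPast η K β hKrange hrec n s hs
  have hηPast : ∀ k ∈ Finset.Icc 1 n, ∀ c : ℝ, MeasurableSet[erwPast η K β n] {ω | η k ω = c} := by
    intro k hk c
    exact ((measurable_eta_erwPast η K β hKrange hrec k (Finset.mem_Icc.1 hk).1).mono
      (erwPast_mono η K β (Finset.mem_Icc.1 hk).2) le_rfl) (MeasurableSet.singleton c)
  have hR : ∫ x in s, Set.indicator {ω | η (n + 1) ω = e} (fun _ => (1:ℝ)) x ∂μ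
      = (μ (s ∩ {ω | η (n + 1) ω = e})).toReal := by
    rw [setIntegral_indicator hT, setIntegral_const, smul_eq_mul, mul_one]
    rfl
  set U : Set Ω := ⋃ k ∈ Finset.Icc 1 n,
    (((s ∩ {ω | η k ω = e}) ∩ ({ω | K n ω = k} ∩ {ω | β (n + 1) ω = 1})) ∪
     ((s ∩ {ω | η k ω = -e}) ∩ ({ω | K n ω = k} ∩ {ω | β (n + 1) ω = -1}))) with hUdef
  have hβpm : ∀ᵐ ω ∂μ, β (n + 1) ω = 1 ∨ β (n + 1) ω = -1 :=
    ae_pm_of_law (β (n + 1)) (hβm _) p hp (hβlaw (n + 1) hnn).1 (hβlaw (n + 1) hnn).2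
  have hallpm : ∀ᵐ ω ∂μ, ∀ j ∈ Finset.Icc 1 n, (η j ω = 1 ∨ η j ω = -1) := by
    rw [Filter.eventually_all_finset]
    exact fun j hj => hpm j (Finset.mem_Icc.1 hj).1
  have hae : (s ∩ {ω | η (n + 1) ω = e} : Set Ω) =ᵐ[μ] U := by
    rw [Filter.eventuallyEq_set]
    filter_upwards [hβpm, hallpm] with ω hβω hηω
    constructor
    · rintro ⟨hωs, hωT⟩
      have hωT' : β (n + 1) ω * η (K n ω) ω = e := by rw [← hrec n hn ω]; exact hωT
      have hk0 : K n ω ∈ Finset.Icc 1 n := hKrange n hn ω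
      simp only [hUdef, Set.mem_iUnion, Set.mem_union, Set.mem_inter_iff, Set.mem_setOf_eq,
        exists_prop]
      refine ⟨K n ω, hk0, ?_⟩
      rcases hβω with hβ1 | hβ1
      · exact Or.inl ⟨⟨hωs, by rw [hβ1, one_mul] at hωT'; exact hωT'⟩, rfl, hβ1⟩
      · refine Or.inr ⟨⟨hωs, ?_⟩, rfl, hβ1⟩
        rw [hβ1] at hωT'; linarith
    · intro hωU
      simp only [hUdef, Set.mem_iUnion, Set.mem_union, Set.mem_inter_iff, Set.mem_setOf_eq,
        exists_prop] at hωU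
      obtain ⟨k, hk, hcase⟩ := hωU
      rcases hcase with ⟨⟨hωs, hηe⟩, hKk, hβ1⟩ | ⟨⟨hωs, hηe⟩, hKk, hβ1⟩ <;>
        refine ⟨hωs, show η (n + 1) ω = e from ?_⟩ <;>
        rw [hrec n hn ω, hKk, hηe, hβ1] <;> ring
  have hmeasterm : ∀ k ∈ Finset.Icc 1 n, MeasurableSet
      (((s ∩ {ω | η k ω = e}) ∩ ({ω | K n ω = k} ∩ {ω | β (n + 1) ω = 1})) ∪
       ((s ∩ {ω | η k ω = -e}) ∩ ({ω | K n ω = k} ∩ {ω | β (n + 1) ω = -1}))) := by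
    intro k _
    exact ((hs0.inter (hηm k (MeasurableSet.singleton e))).inter
        ((hKm n (MeasurableSet.singleton k)).inter (hβm (n+1) (MeasurableSet.singleton 1)))).union
      ((hs0.inter (hηm k (MeasurableSet.singleton (-e)))).inter
        ((hKm n (MeasurableSet.singleton k)).inter (hβm (n+1) (MeasurableSet.singleton (-1)))))
  have hdisj : Set.PairwiseDisjoint (↑(Finset.Icc 1 n)) (fun k =>
      ((s ∩ {ω | η k ω = e}) ∩ ({ω | K n ω = k} ∩ {ω | β (n + 1) ω = 1})) ∪
      ((s ∩ {ω | η k ω = -e}) ∩ ({ω | K n ω = k} ∩ {ω | β (n + 1) ω = -1}))) := by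
    intro k _ k' _ hkk'
    refine Set.disjoint_left.2 fun ω h1 h2 => ?_
    simp only [Set.mem_union, Set.mem_inter_iff, Set.mem_setOf_eq] at h1 h2
    have hK1 : K n ω = k := by rcases h1 with ⟨_, h, _⟩ | ⟨_, h, _⟩ <;> exact h
    have hK2 : K n ω = k' := by rcases h2 with ⟨_, h, _⟩ | ⟨_, h, _⟩ <;> exact h
    exact hkk' (hK1 ▸ hK2)
  have hβdisj : ∀ k : ℕ, Disjoint
      ((s ∩ {ω | η k ω = e}) ∩ ({ω | K n ω = k} ∩ {ω | β (n + 1) ω = 1}))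
      ((s ∩ {ω | η k ω = -e}) ∩ ({ω | K n ω = k} ∩ {ω | β (n + 1) ω = -1})) := by
    intro k
    refine Set.disjoint_left.2 fun ω h1 h2 => ?_
    simp only [Set.mem_inter_iff, Set.mem_setOf_eq] at h1 h2
    have := h1.2.2
    rw [h2.2.2] at this
    norm_num at this
  have hterm1 : ∀ k ∈ Finset.Icc 1 n,
      μ ((s ∩ {ω | η k ω = e}) ∩ ({ω | K n ω = k} ∩ {ω | β (n + 1) ω = 1}))
        = μ (s ∩ {ω | η k ω = e}) * ((1 / (n:ENNReal)) * ENNReal.ofReal p) := by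
    intro k hk
    rw [erw_indep_mul η K β hηm hKm hβm hindep n hn (hsPast.inter (hηPast k hk e)) k 1,
      hKunif n hn k hk, (hβlaw (n + 1) hnn).1]
  have hterm2 : ∀ k ∈ Finset.Icc 1 n,
      μ ((s ∩ {ω | η k ω = -e}) ∩ ({ω | K n ω = k} ∩ {ω | β (n + 1) ω = -1}))
        = μ (s ∩ {ω | η k ω = -e}) * ((1 / (n:ENNReal)) * ENNReal.ofReal (1 - p)) := by
    intro k hk
    rw [erw_indep_mul η K β hηm hKm hβm hindep n hn (hsPast.inter (hηPast k hk (-e))) k (-1),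
      hKunif n hn k hk, (hβlaw (n + 1) hnn).2]
  have hfin : ∀ k ∈ Finset.Icc 1 n,
      μ (s ∩ {ω | η k ω = e}) * ((1 / (n:ENNReal)) * ENNReal.ofReal p)
      + μ (s ∩ {ω | η k ω = -e}) * ((1 / (n:ENNReal)) * ENNReal.ofReal (1 - p)) ≠ ⊤ := by
    intro k _
    exact ENNReal.add_ne_top.2
      ⟨ENNReal.mul_ne_top (measure_ne_top μ _) (ENNReal.mul_ne_top h1n ENNReal.ofReal_ne_top),
       ENNReal.mul_ne_top (measure_ne_top μ _) (ENNReal.mul_ne_top h1n ENNReal.ofReal_ne_top)⟩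
  have hμU : μ (s ∩ {ω | η (n + 1) ω = e}) = ∑ k ∈ Finset.Icc 1 n,
      (μ (s ∩ {ω | η k ω = e}) * ((1 / (n:ENNReal)) * ENNReal.ofReal p)
      + μ (s ∩ {ω | η k ω = -e}) * ((1 / (n:ENNReal)) * ENNReal.ofReal (1 - p))) := by
    rw [measure_congr hae, hUdef, measure_biUnion_finset hdisj hmeasterm]
    refine Finset.sum_congr rfl fun k hk => ?_
    rw [measure_union (hβdisj k) ((hs0.inter (hηm k (MeasurableSet.singleton (-e)))).inter
      ((hKm n (MeasurableSet.singleton k)).inter (hβm (n+1) (MeasurableSet.singleton (-1))))),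
      hterm1 k hk, hterm2 k hk]
  have hLHS : ∫ x in s, g x ∂μ = ∑ k ∈ Finset.Icc 1 n,
      ((1 / (2 * (n:ℝ))) * (2 * p * (μ (s ∩ {ω | η k ω = e})).toReal
        + (2 - 2 * p) * (μ (s ∩ {ω | η k ω = -e})).toReal)) := by
    rw [hgdef]
    simp only
    rw [integral_const_mul, integral_finset_sum _
      (fun k hk => (hHint k (Finset.mem_Icc.1 hk).1).integrableOn), Finset.mul_sum]
    refine Finset.sum_congr rfl fun k hk => ?_
    congr 1
    rw [integral_congr_ae (ae_restrict_of_ae (hcongr k (Finset.mem_Icc.1 hk).1))]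
    have hi1 : Integrable (fun ω => (2 * p) * Set.indicator {ω | η k ω = e} (fun _ => (1:ℝ)) ω) μ :=
      ((integrable_const (1:ℝ)).indicator (hmeas_e k e)).const_mul _
    have hi2 : Integrable
        (fun ω => (2 - 2 * p) * Set.indicator {ω | η k ω = -e} (fun _ => (1:ℝ)) ω) μ :=
      ((integrable_const (1:ℝ)).indicator (hmeas_e k (-e))).const_mul _
    rw [integral_add hi1.integrableOn hi2.integrableOn,
      integral_const_mul, integral_const_mul,
      setIntegral_indicator (hmeas_e k e),
      setIntegral_indicator (hmeas_e k (-e)),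
      setIntegral_const, setIntegral_const]
    simp [smul_eq_mul]
    rfl
  rw [hLHS, hR, hμU, ENNReal.toReal_sum hfin]
  refine Finset.sum_congr rfl fun k hk => ?_
  rw [ENNReal.toReal_add
      (ENNReal.mul_ne_top (measure_ne_top μ _) (ENNReal.mul_ne_top h1n ENNReal.ofReal_ne_top))
      (ENNReal.mul_ne_top (measure_ne_top μ _) (ENNReal.mul_ne_top h1n ENNReal.ofReal_ne_top)),
    ENNReal.toReal_mul, ENNReal.toReal_mul, ENNReal.toReal_mul, ENNReal.toReal_mul,
    ENNReal.toReal_div, ENNReal.toReal_one, ENNReal.toReal_natCast,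
    ENNReal.toReal_ofReal hp.1, ENNReal.toReal_ofReal (by linarith [hp.2])]
  field_simp
end

section
/- Let M ≥ 2, let p, u be real numbers, let n_1, …, n_M be positive integers, and let L_n be the M-replica mean field generator acting on functions f : ℝ^M → ℝ by (L_n f)(x) = Σ_{i=1}^{M} Σ_{j≠i} Σ_{y∈{−1,1}} [(x_j y (2p−1) + n_j)/(2 n_j M (M−1))]·(f(x + y e_i) − f(x)), where e_1,…,e_M is the canonical basis of ℝ^M. Then for V_u(x) = Π_{i=1}^{M} e^{u x_i} one has the identity (L_n V_u)(x) = [ ((2p−1)(e^u − e^{−u})/(2M)) Σ_{j=1}^{M} x_j/n_j + (e^u + e^{−u} − 2)/2 ]·V_u(x) for all x ∈ ℝ^M. -/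
/-- For the `M`-replica mean field generator of the uniform-memory ERW,
`(L_n f)(x) = Σ_i Σ_{j ≠ i} Σ_{y ∈ {-1,1}} ((x_j y (2p-1) + n_j)/(2 n_j M (M-1)))
  (f(x + y e_i) - f x)`,
acting on `V_u(x) = Π_i exp (u x_i)`, one has
`(L_n V_u)(x) = ((2p-1)(e^u - e^{-u})/(2M) Σ_j x_j/n_j + (e^u + e^{-u} - 2)/2) V_u(x)`. -/
theorem rmf_generator_exp
    {M : ℕ} (hM : 2 ≤ M) (p u : ℝ) (nvec : Fin M → ℕ) (hn : ∀ j, 1 ≤ nvec j)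
    (L : ((Fin M → ℝ) → ℝ) → (Fin M → ℝ) → ℝ)
    (hL : ∀ (f : (Fin M → ℝ) → ℝ) (x : Fin M → ℝ), L f x =
      ∑ i : Fin M, ∑ j ∈ Finset.univ.erase i, ∑ y ∈ ({-1, 1} : Finset ℝ),
        ((x j * y * (2 * p - 1) + (nvec j : ℝ)) /
            (2 * (nvec j : ℝ) * (M : ℝ) * ((M : ℝ) - 1))) *
          (f (Function.update x i (x i + y)) - f x))
    (x : Fin M → ℝ) :
    L (fun z => ∏ i, Real.exp (u * z i)) x =
      ((2 * p - 1) * (Real.exp u - Real.exp (-u)) / (2 * M) *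
          ∑ j, x j / (nvec j : ℝ) +
        (Real.exp u + Real.exp (-u) - 2) / 2) * ∏ i, Real.exp (u * x i) := by
  have hM2 : (2 : ℝ) ≤ (M : ℝ) := by exact_mod_cast hM
  have hM0 : (M : ℝ) ≠ 0 := by linarith
  have hM1 : (M : ℝ) - 1 ≠ 0 := by linarith
  set V := ∏ i, Real.exp (u * x i) with hV
  have key : ∀ (k : Fin M) (y : ℝ),
      (∏ i, Real.exp (u * Function.update x k (x k + y) i)) = Real.exp (u * y) * V := by
    intro k y
    have h1 : (fun i => Real.exp (u * Function.update x k (x k + y) i))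
        = Function.update (fun i => Real.exp (u * x i)) k (Real.exp (u * (x k + y))) := by
      funext i
      rcases eq_or_ne i k with h | h
      · subst h; simp
      · simp [Function.update_of_ne h]
    rw [h1, Finset.prod_update_of_mem (Finset.mem_univ k), hV,
      ← Finset.mul_prod_erase Finset.univ (fun i => Real.exp (u * x i)) (Finset.mem_univ k),
      ← mul_assoc, ← Real.exp_add, Finset.sdiff_singleton_eq_erase,
      show u * (x k + y) = u * y + u * x k by ring]
  rw [hL]
  simp only [key]
  -- define the j-summand
  set g : Fin M → ℝ := fun j => ∑ y ∈ ({-1, 1} : Finset ℝ),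
      ((x j * y * (2 * p - 1) + (nvec j : ℝ)) /
          (2 * (nvec j : ℝ) * (M : ℝ) * ((M : ℝ) - 1))) *
        (Real.exp (u * y) * V - V) with hg
  have step1 : ∀ i : Fin M,
      (∑ j ∈ Finset.univ.erase i, g j) = (∑ j, g j) - g i := by
    intro i
    exact Finset.sum_erase_eq_sub (Finset.mem_univ i)
  calc
    (∑ i : Fin M, ∑ j ∈ Finset.univ.erase i, ∑ y ∈ ({-1, 1} : Finset ℝ),
        ((x j * y * (2 * p - 1) + (nvec j : ℝ)) /
            (2 * (nvec j : ℝ) * (M : ℝ) * ((M : ℝ) - 1))) *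
          (Real.exp (u * y) * V - V))
        = ∑ i : Fin M, ((∑ j, g j) - g i) := by
          refine Finset.sum_congr rfl fun i _ => ?_
          rw [← step1 i]
    _ = (M : ℝ) * (∑ j, g j) - (∑ j, g j) := by
          rw [Finset.sum_sub_distrib, Finset.sum_const, Finset.card_univ, Fintype.card_fin,
            nsmul_eq_mul]
    _ = ∑ j, ((M : ℝ) - 1) * g j := by
          rw [Finset.mul_sum]
          rw [← Finset.sum_sub_distrib]
          refine Finset.sum_congr rfl fun j _ => ?_
          ring
    _ = ∑ j, ((2 * p - 1) * (Real.exp u - Real.exp (-u)) / (2 * M) * (x j / (nvec j : ℝ)) * V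
            + (Real.exp u + Real.exp (-u) - 2) / (2 * M) * V) := by
          refine Finset.sum_congr rfl fun j _ => ?_
          have hnj : ((nvec j : ℝ)) ≠ 0 := by
            have := hn j
            positivity
          rw [hg]
          simp only []
          rw [show ({-1, 1} : Finset ℝ) = insert (-1) {1} from rfl,
            Finset.sum_insert (by norm_num), Finset.sum_singleton]
          rw [mul_neg_one, mul_one]
          field_simp
          ring
    _ = ((2 * p - 1) * (Real.exp u - Real.exp (-u)) / (2 * M) *
          ∑ j, x j / (nvec j : ℝ) +
        (Real.exp u + Real.exp (-u) - 2) / 2) * V := by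
          rw [Finset.sum_add_distrib, Finset.sum_const, Finset.card_univ, Fintype.card_fin,
            ← Finset.sum_mul, ← Finset.mul_sum, nsmul_eq_mul]
          field_simp
end
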